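/- arXiv:2310.11809 — 7 statements merged into one kernel-verified Lean document; each statement's English description precedes it below -/
import Mathlib

section
/- Let p be a prime and G a finite p-group. Then the following three statements are equivalent: (i) the power graph P(G) is cyclically separable; (ii) ∂(G) ≥ 3; (iii) one of the following holds: (a) p > 3 and G is non-cyclic, (b) p = 3 and G has at least two maximal cyclic subgroups of order greater than 3, (c) p = 2 and either G has at least two maximal cyclic subgroups of order greater than 4, or G has at least two maximal cyclic subgroups of order greater than 2 with trivial intersection. -/
/-- The power graph of a group `G`: distinct `x, y` are adjacent iff one is a power
of the other. -/
def powerGraph (G : Type*) [Group G] : SimpleGraph G where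
  Adj x y := x ≠ y ∧ (x ∈ Subgroup.zpowers y ∨ y ∈ Subgroup.zpowers x)
  symm := ⟨fun _ _ h => ⟨h.1.symm, h.2.symm⟩⟩
  loopless := ⟨fun _ h => h.1 rfl⟩

/-- The enhanced power graph of a group `G`: distinct `x, y` are adjacent iff they
lie in a common cyclic subgroup. -/
def enhancedPowerGraph (G : Type*) [Group G] : SimpleGraph G where
  Adj x y := x ≠ y ∧ ∃ z : G, x ∈ Subgroup.zpowers z ∧ y ∈ Subgroup.zpowers z
  symm := ⟨fun _ _ h => ⟨h.1.symm, h.2.choose, h.2.choose_spec.2, h.2.choose_spec.1⟩⟩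
  loopless := ⟨fun _ h => h.1 rfl⟩

/-- A subgroup is a maximal cyclic subgroup if it is cyclic and not properly contained
in any other cyclic subgroup. -/
def IsMaximalCyclic {G : Type*} [Group G] (M : Subgroup G) : Prop :=
  (∃ x : G, M = Subgroup.zpowers x) ∧
    ∀ N : Subgroup G, (∃ y : G, N = Subgroup.zpowers y) → M ≤ N → M = N

/-- The difference number `∂(G)`: the maximum of
`min (|M \ N|, |N \ M|)` over pairs of maximal cyclic subgroups `M, N`. -/
noncomputable def diffNumber (G : Type*) [Group G] : ℕ :=
  sSup { n : ℕ | ∃ M N : Subgroup G, IsMaximalCyclic M ∧ IsMaximalCyclic N ∧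
    n = min (((M : Set G) \ (N : Set G)).ncard) (((N : Set G) \ (M : Set G)).ncard) }

/-- A graph has a cycle. -/
def HasCycle {V : Type*} (Γ : SimpleGraph V) : Prop :=
  ∃ (v : V) (w : Γ.Walk v v), w.IsCycle

/-- `S` is a cyclic vertex cutset of `Γ` if `Γ - S` is disconnected and at least two
of its connected components contain a cycle. -/
def IsCyclicVertexCutset {V : Type*} (Γ : SimpleGraph V) (S : Set V) : Prop :=
  ¬ (Γ.induce Sᶜ).Connected ∧
    ∃ u v : ↥Sᶜ, ¬ (Γ.induce Sᶜ).Reachable u v ∧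
      (∃ w : (Γ.induce Sᶜ).Walk u u, w.IsCycle) ∧
      (∃ w : (Γ.induce Sᶜ).Walk v v, w.IsCycle)

/-- A graph is cyclically separable if it has a cyclic vertex cutset. -/
def CyclicallySeparable {V : Type*} (Γ : SimpleGraph V) : Prop :=
  ∃ S : Set V, IsCyclicVertexCutset Γ S

/-- The cyclic vertex connectivity: the minimum cardinality of a cyclic vertex cutset,
`⊤ = ∞` if there is none. -/
noncomputable def cyclicVertexConnectivity {V : Type*} (Γ : SimpleGraph V) : ℕ∞ :=
  ⨅ S ∈ {S : Set V | IsCyclicVertexCutset Γ S}, (S.ncard : ℕ∞)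

/-- The vertex connectivity: the minimum number of vertices whose deletion results in a
disconnected or trivial graph. -/
noncomputable def vertexConnectivity {V : Type*} (Γ : SimpleGraph V) : ℕ :=
  sInf { n : ℕ | ∃ S : Set V, S.ncard = n ∧
    ((Sᶜ : Set V).Subsingleton ∨ ¬ (Γ.induce Sᶜ).Connected) }

section Aux

open Subgroup SimpleGraph

variable {G : Type*} [Group G]

/-- In a finite group, inside a cyclic subgroup, divisibility of orders gives membership. -/
lemma aux_mem_zpowers_of_orderOf_dvd [Finite G] {z x y : G}
    (hx : x ∈ zpowers z) (hy : y ∈ zpowers z) (h : orderOf x ∣ orderOf y) :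
    x ∈ zpowers y := by
  classical
  cases nonempty_fintype G
  set H := zpowers z with hH
  have hcyc : IsCyclic H := by
    refine ⟨⟨⟨z, mem_zpowers z⟩, ?_⟩⟩
    rintro ⟨w, hw⟩
    obtain ⟨k, hk⟩ := mem_zpowers_iff.mp hw
    exact mem_zpowers_iff.mpr ⟨k, by ext; simpa using hk⟩
  set x' : H := ⟨x, hx⟩
  set y' : H := ⟨y, hy⟩
  have hordy : orderOf y' = orderOf y := Subgroup.orderOf_mk y hy
  have hordx : orderOf x' = orderOf x := Subgroup.orderOf_mk x hx
  have hn0 : 0 < orderOf y := orderOf_pos y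
  have hle : ({a : H | a ^ (orderOf y) = 1} : Finset H).card ≤ orderOf y :=
    IsCyclic.card_pow_eq_one_le hn0
  have hsub : ((zpowers y' : Set H).toFinset) ⊆ ({a : H | a ^ (orderOf y) = 1} : Finset H) := by
    intro a ha
    simp only [Set.mem_toFinset, SetLike.mem_coe, mem_zpowers_iff] at ha
    obtain ⟨k, rfl⟩ := ha
    simp only [Finset.mem_filter, Finset.mem_univ, true_and, Set.mem_setOf_eq]
    rw [← zpow_natCast, ← zpow_mul, mul_comm, zpow_mul, zpow_natCast]
    have : y' ^ (orderOf y) = 1 := by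
      rw [← hordy]; exact pow_orderOf_eq_one y'
    simp [this]
  have hcard : ((zpowers y' : Set H).toFinset).card = orderOf y := by
    rw [Set.toFinset_card]
    have : Fintype.card (zpowers y' : Set H) = Fintype.card (zpowers y') := by
      apply Fintype.card_congr; rfl
    rw [this, Fintype.card_zpowers, hordy]
  have heq : ((zpowers y' : Set H).toFinset) = ({a : H | a ^ (orderOf y) = 1} : Finset H) :=
    Finset.eq_of_subset_of_card_le hsub (by rw [hcard]; exact hle)
  have hx'mem : x' ∈ ({a : H | a ^ (orderOf y) = 1} : Finset H) := by
    simp only [Finset.mem_filter, Finset.mem_univ, true_and, Set.mem_setOf_eq]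
    have : orderOf x' ∣ orderOf y := hordx ▸ h
    exact orderOf_dvd_iff_pow_eq_one.mp this
  rw [← heq] at hx'mem
  simp only [Set.mem_toFinset, SetLike.mem_coe, mem_zpowers_iff] at hx'mem
  obtain ⟨k, hk⟩ := hx'mem
  exact mem_zpowers_iff.mpr ⟨k, by simpa using congrArg Subtype.val hk⟩

/-- Comparability plus order inequality gives membership. -/
lemma aux_mem_zpowers_of_le [Finite G] {x y : G}
    (h : x ∈ zpowers y ∨ y ∈ zpowers x) (hord : orderOf x ≤ orderOf y) :
    x ∈ zpowers y := by
  rcases h with h | h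
  · exact h
  · have hle : zpowers y ≤ zpowers x := zpowers_le.mpr h
    have hcard : Nat.card (zpowers x) ≤ Nat.card (zpowers y) := by
      rw [Nat.card_zpowers, Nat.card_zpowers]; exact hord
    have : zpowers y = zpowers x := Subgroup.eq_of_le_of_card_ge hle hcard
    exact this ▸ mem_zpowers x

/-- In a `p`-group, elements of one cyclic subgroup are comparable. -/
lemma aux_chain {p : ℕ} (hp : p.Prime) (hG : IsPGroup p G) [Finite G] {z x y : G}
    (hx : x ∈ zpowers z) (hy : y ∈ zpowers z) :
    x ∈ zpowers y ∨ y ∈ zpowers x := by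
  haveI := Fact.mk hp
  obtain ⟨i, hi⟩ := IsPGroup.iff_orderOf.mp hG x
  obtain ⟨j, hj⟩ := IsPGroup.iff_orderOf.mp hG y
  rcases le_total i j with hij | hij
  · exact Or.inl (aux_mem_zpowers_of_orderOf_dvd hx hy (by rw [hi, hj]; exact pow_dvd_pow p hij))
  · exact Or.inr (aux_mem_zpowers_of_orderOf_dvd hy hx (by rw [hi, hj]; exact pow_dvd_pow p hij))

/-- Every cyclic subgroup is contained in a maximal cyclic subgroup. -/
lemma aux_exists_maximalCyclic [Finite G] (x : G) :
    ∃ M : Subgroup G, IsMaximalCyclic M ∧ zpowers x ≤ M := by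
  have hfin : ({K : Subgroup G | (∃ y, K = zpowers y) ∧ zpowers x ≤ K}).Finite :=
    Set.toFinite _
  obtain ⟨M, hMmem, hMmax⟩ := Set.Finite.exists_maximalFor id _ hfin ⟨zpowers x, ⟨x, rfl⟩, le_rfl⟩
  refine ⟨M, ⟨hMmem.1, ?_⟩, hMmem.2⟩
  intro N hN hMN
  exact le_antisymm hMN (hMmax ⟨hN, le_trans hMmem.2 hMN⟩ hMN)

lemma aux_ncard_diff [Finite G] (M N : Subgroup G) :
    ((M : Set G) \ (N : Set G)).ncard = Nat.card M - Nat.card (M ⊓ N : Subgroup G) := by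
  have h1 : (M : Set G) \ (N : Set G) = (M : Set G) \ ((M ⊓ N : Subgroup G) : Set G) := by
    rw [Subgroup.coe_inf]; ext a; simp only [Set.mem_diff, Set.mem_inter_iff]; tauto
  rw [h1, Set.ncard_diff (by rw [Subgroup.coe_inf]; exact Set.inter_subset_left) (Set.toFinite _)]
  rw [← Nat.card_coe_set_eq, ← Nat.card_coe_set_eq]
  rfl

lemma aux_card_inf_pos [Finite G] (M N : Subgroup G) : 0 < Nat.card (M ⊓ N : Subgroup G) :=
  Nat.card_pos

lemma aux_p_mul_card_inf_le {p : ℕ} (hp : p.Prime) (hG : IsPGroup p G) [Finite G]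
    {M N : Subgroup G} (h : ¬ M ≤ N) :
    p * Nat.card (M ⊓ N : Subgroup G) ≤ Nat.card M := by
  haveI := Fact.mk hp
  have hdvd : Nat.card (M ⊓ N : Subgroup G) ∣ Nat.card M :=
    Subgroup.card_dvd_of_le inf_le_left
  obtain ⟨b, hb⟩ := IsPGroup.iff_card.mp (IsPGroup.to_subgroup hG M)
  have hne : Nat.card (M ⊓ N : Subgroup G) ≠ Nat.card M := by
    intro hcard
    have : M ⊓ N = M := Subgroup.eq_of_le_of_card_ge inf_le_left (le_of_eq hcard.symm)
    exact h (inf_eq_left.mp this)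
  obtain ⟨a, ha, hda⟩ := (Nat.dvd_prime_pow hp).mp (hb ▸ hdvd)
  have hab : a < b := by
    rcases lt_or_eq_of_le ha with h' | h'
    · exact h'
    · exact absurd (by rw [hda, h', hb]) hne
  calc p * Nat.card (M ⊓ N : Subgroup G) = p ^ (a + 1) := by rw [hda, pow_succ, mul_comm]
    _ ≤ p ^ b := Nat.pow_le_pow_right hp.pos hab
    _ = Nat.card M := hb.symm

lemma aux_pred_of_reachable {V : Type*} {Γ : SimpleGraph V} {P : V → Prop}
    (hP : ∀ a b, Γ.Adj a b → P a → P b) {u v : V} (h : Γ.Reachable u v) (hu : P u) : P v := by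
  obtain ⟨w⟩ := h
  induction w with
  | nil => exact hu
  | cons h' p ih => exact ih (hP _ _ h' hu)

lemma aux_triangle {V : Type*} {Γ : SimpleGraph V} {a b c : V}
    (hab : Γ.Adj a b) (hbc : Γ.Adj b c) (hca : Γ.Adj c a) :
    ∃ w : Γ.Walk a a, w.IsCycle := by
  refine ⟨Walk.cons hab (Walk.cons hbc (Walk.cons hca Walk.nil)), ?_⟩
  have hab' := hab.ne
  have hbc' := hbc.ne
  have hca' := hca.ne
  simp [Walk.isCycle_def, Walk.isTrail_def, Sym2.eq_iff, List.nodup_cons, hab', hbc', hca',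
    hab'.symm, hbc'.symm, hca'.symm, Ne.symm]

lemma aux_path_getVert_injOn {V : Type*} {Γ : SimpleGraph V} {u v : V} {p : Γ.Walk u v}
    (hp : p.IsPath) : ∀ i ≤ p.length, ∀ j ≤ p.length, p.getVert i = p.getVert j → i = j := by
  induction p with
  | nil => intro i hi j hj _; simp only [Walk.length_nil, Nat.le_zero] at hi hj; omega
  | cons h q ih =>
    intro i hi j hj hij
    rw [Walk.cons_isPath_iff] at hp
    match i, j with
    | 0, 0 => rfl
    | 0, Nat.succ j' =>
      exfalso
      apply hp.2
      rw [Walk.mem_support_iff_exists_getVert]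
      refine ⟨j', ?_, by simpa [Walk.length_cons] using hj⟩
      simpa [Walk.getVert_zero, Walk.getVert_cons_succ] using hij.symm
    | Nat.succ i', 0 =>
      exfalso
      apply hp.2
      rw [Walk.mem_support_iff_exists_getVert]
      refine ⟨i', ?_, by simpa [Walk.length_cons] using hi⟩
      simpa [Walk.getVert_zero, Walk.getVert_cons_succ] using hij
    | Nat.succ i', Nat.succ j' =>
      have := ih hp.1 i' (by simpa [Walk.length_cons] using hi) j'
        (by simpa [Walk.length_cons] using hj)
        (by simpa [Walk.getVert_cons_succ] using hij)
      omega

/-- `getVert` is injective on `[0, length)` for a cycle. -/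
lemma aux_cycle_getVert_injOn {V : Type*} {Γ : SimpleGraph V} {u : V} {w : Γ.Walk u u}
    (hw : w.IsCycle) : ∀ i < w.length, ∀ j < w.length, w.getVert i = w.getVert j → i = j := by
  cases w with
  | nil => exact absurd hw (Walk.IsCycle.not_of_nil)
  | cons hadj q =>
    have hq : q.IsPath := (Walk.cons_isCycle_iff q hadj |>.mp ?cyc).1
    case cyc => exact hw
    intro i hi j hj hij
    simp only [Walk.length_cons] at hi hj
    match i, j with
    | 0, 0 => rfl
    | 0, Nat.succ j' =>
      exfalso
      have h1 : q.getVert q.length = u := Walk.getVert_length q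
      have h2 : q.getVert j' = u := by
        simpa [Walk.getVert_zero, Walk.getVert_cons_succ] using hij.symm
      have := aux_path_getVert_injOn hq j' (by omega) q.length le_rfl (h2.trans h1.symm)
      omega
    | Nat.succ i', 0 =>
      exfalso
      have h1 : q.getVert q.length = u := Walk.getVert_length q
      have h2 : q.getVert i' = u := by
        simpa [Walk.getVert_zero, Walk.getVert_cons_succ] using hij
      have := aux_path_getVert_injOn hq i' (by omega) q.length le_rfl (h2.trans h1.symm)
      omega
    | Nat.succ i', Nat.succ j' =>
      have := aux_path_getVert_injOn hq i' (by omega) j' (by omega)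
        (by simpa [Walk.getVert_cons_succ] using hij)
      omega

/-- From a cycle, extract three distinct vertices, reachable from the base point,
whose images all lie in a common cyclic subgroup. -/
lemma aux_exists_triple {V : Type*} {Γ : SimpleGraph V}
    (m : V → G)
    (hcomp : ∀ a b : V, Γ.Adj a b → orderOf (m b) ≤ orderOf (m a) → m b ∈ zpowers (m a))
    {u : V} (w : Γ.Walk u u) (hw : w.IsCycle) :
    ∃ a b c : V, a ≠ b ∧ a ≠ c ∧ b ≠ c ∧
      Γ.Reachable u a ∧ Γ.Reachable u b ∧ Γ.Reachable u c ∧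
      m a ∈ zpowers (m c) ∧ m b ∈ zpowers (m c) := by
  classical
  set n := w.length with hn_def
  have hn : 3 ≤ n := hw.three_le_length
  set v : ℕ → V := w.getVert with hv_def
  have inj := aux_cycle_getVert_injOn hw
  have hAdj : ∀ i < n, Γ.Adj (v i) (v ((i + 1) % n)) := by
    intro i hi
    by_cases h : i + 1 < n
    · rw [Nat.mod_eq_of_lt h]; exact w.adj_getVert_succ hi
    · have he : i + 1 = n := by omega
      have h2 : w.getVert (i + 1) = w.getVert ((i + 1) % n) := by
        rw [he, Nat.mod_self, Walk.getVert_length, Walk.getVert_zero]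
      show Γ.Adj (w.getVert i) (w.getVert ((i + 1) % n))
      rw [← h2]; exact w.adj_getVert_succ hi
  have hreach : ∀ i ≤ n, Γ.Reachable u (v i) := by
    intro i hi
    have hmem : v i ∈ w.support := Walk.mem_support_iff_exists_getVert.mpr ⟨i, rfl, hi⟩
    exact (w.takeUntil _ hmem).reachable
  obtain ⟨i₀, hi₀mem, hmax⟩ := Finset.exists_max_image (Finset.range n)
    (fun i => orderOf (m (v i))) ⟨0, Finset.mem_range.mpr (by omega)⟩
  have hi₀ : i₀ < n := Finset.mem_range.mp hi₀mem
  set ia := (i₀ + 1) % n with hia_def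
  set ib := (i₀ + (n - 1)) % n with hib_def
  have hia_lt : ia < n := Nat.mod_lt _ (by omega)
  have hib_lt : ib < n := Nat.mod_lt _ (by omega)
  have adj_ca : Γ.Adj (v i₀) (v ia) := hAdj i₀ hi₀
  have hib1 : (ib + 1) % n = i₀ := by
    rw [hib_def, Nat.mod_add_mod]
    have : i₀ + (n - 1) + 1 = i₀ + n := by omega
    rw [this, Nat.add_mod_right, Nat.mod_eq_of_lt hi₀]
  have adj_bc : Γ.Adj (v ib) (v i₀) := by
    have := hAdj ib hib_lt
    rwa [hib1] at this
  have hma : m (v ia) ∈ zpowers (m (v i₀)) :=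
    hcomp _ _ adj_ca (hmax ia (Finset.mem_range.mpr hia_lt))
  have hmb : m (v ib) ∈ zpowers (m (v i₀)) :=
    hcomp _ _ adj_bc.symm (hmax ib (Finset.mem_range.mpr hib_lt))
  refine ⟨v ia, v ib, v i₀, ?_, adj_ca.ne', adj_bc.ne,
    hreach ia hia_lt.le, hreach ib hib_lt.le, hreach i₀ hi₀.le, hma, hmb⟩
  intro hab
  have hii : ia = ib := inj ia hia_lt ib hib_lt hab
  have hmod : (i₀ + 1) % n = (i₀ + (n - 1)) % n := hii
  have hdvd : n ∣ (i₀ + (n - 1)) - (i₀ + 1) :=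
    (Nat.modEq_iff_dvd' (by omega)).mp hmod
  have hd2 : (i₀ + (n - 1)) - (i₀ + 1) = n - 2 := by omega
  rw [hd2] at hdvd
  have := Nat.le_of_dvd (by omega) hdvd
  omega

lemma aux_exists_three {α : Type*} {s : Set α} (hfin : s.Finite) (h : 3 ≤ s.ncard) :
    ∃ a b c, a ∈ s ∧ b ∈ s ∧ c ∈ s ∧ a ≠ b ∧ a ≠ c ∧ b ≠ c := by
  classical
  obtain ⟨a, ha⟩ := Set.nonempty_of_ncard_ne_zero (by omega : s.ncard ≠ 0)
  have h1 : 2 ≤ (s \ {a}).ncard := by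
    have := Set.ncard_diff (by simpa using ha : ({a} : Set α) ⊆ s)
    rw [Set.ncard_singleton] at this
    omega
  obtain ⟨b, hb⟩ := Set.nonempty_of_ncard_ne_zero (by omega : (s \ {a}).ncard ≠ 0)
  have h2 : 1 ≤ ((s \ {a}) \ {b}).ncard := by
    have := Set.ncard_diff (by simpa using hb : ({b} : Set α) ⊆ s \ {a})
    rw [Set.ncard_singleton] at this
    omega
  obtain ⟨c, hc⟩ := Set.nonempty_of_ncard_ne_zero (by omega : ((s \ {a}) \ {b}).ncard ≠ 0)
  refine ⟨a, b, c, ha, hb.1, hc.1.1, ?_, ?_, ?_⟩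
  · rintro rfl; exact hb.2 rfl
  · rintro rfl; exact hc.1.2 rfl
  · rintro rfl; exact hc.2 rfl

lemma aux_three_le_ncard {α : Type*} {s : Set α} (hfin : s.Finite) {a b c : α}
    (ha : a ∈ s) (hb : b ∈ s) (hc : c ∈ s) (hab : a ≠ b) (hac : a ≠ c) (hbc : b ≠ c) :
    3 ≤ s.ncard := by
  have h3 : ({a, b, c} : Set α).ncard = 3 :=
    Set.ncard_eq_three.mpr ⟨a, b, c, hab, hac, hbc, rfl⟩
  calc 3 = ({a, b, c} : Set α).ncard := h3.symm
    _ ≤ s.ncard := Set.ncard_le_ncard (by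
        intro x hx
        rcases hx with rfl | rfl | rfl <;> assumption) hfin

lemma aux_diff_bddAbove [Finite G] :
    BddAbove { n : ℕ | ∃ M N : Subgroup G, IsMaximalCyclic M ∧ IsMaximalCyclic N ∧
      n = min (((M : Set G) \ (N : Set G)).ncard) (((N : Set G) \ (M : Set G)).ncard) } := by
  refine ⟨Nat.card G, ?_⟩
  rintro n ⟨M, N, hM, hN, rfl⟩
  calc min (((M : Set G) \ (N : Set G)).ncard) (((N : Set G) \ (M : Set G)).ncard)
      ≤ ((M : Set G) \ (N : Set G)).ncard := min_le_left _ _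
    _ ≤ (Set.univ : Set G).ncard := Set.ncard_le_ncard (Set.subset_univ _) Set.finite_univ
    _ = Nat.card G := Set.ncard_univ G

lemma aux_le_diffNumber [Finite G] {M N : Subgroup G}
    (hM : IsMaximalCyclic M) (hN : IsMaximalCyclic N) :
    min (((M : Set G) \ (N : Set G)).ncard) (((N : Set G) \ (M : Set G)).ncard)
      ≤ diffNumber G :=
  le_csSup aux_diff_bddAbove ⟨M, N, hM, hN, rfl⟩

lemma aux_of_diffNumber_ge [Finite G] (h : 3 ≤ diffNumber G) :
    ∃ M N : Subgroup G, IsMaximalCyclic M ∧ IsMaximalCyclic N ∧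
      3 ≤ ((M : Set G) \ (N : Set G)).ncard ∧ 3 ≤ ((N : Set G) \ (M : Set G)).ncard := by
  have hne : { n : ℕ | ∃ M N : Subgroup G, IsMaximalCyclic M ∧ IsMaximalCyclic N ∧
      n = min (((M : Set G) \ (N : Set G)).ncard) (((N : Set G) \ (M : Set G)).ncard) }.Nonempty := by
    by_contra hemp
    rw [Set.not_nonempty_iff_eq_empty] at hemp
    rw [diffNumber, hemp, csSup_empty] at h
    simp at h
  have hmem := Nat.sSup_mem hne aux_diff_bddAbove
  obtain ⟨M, N, hM, hN, heq⟩ := hmem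
  refine ⟨M, N, hM, hN, ?_, ?_⟩
  · have : 3 ≤ min (((M : Set G) \ (N : Set G)).ncard) (((N : Set G) \ (M : Set G)).ncard) := by
      rw [← heq]; exact h
    omega
  · have : 3 ≤ min (((M : Set G) \ (N : Set G)).ncard) (((N : Set G) \ (M : Set G)).ncard) := by
      rw [← heq]; exact h
    omega

end Aux


section Impl

open Subgroup SimpleGraph

variable {G : Type*} [Group G]

lemma aux_impl_1_2 {p : ℕ} (hp : p.Prime) [Finite G] (hG : IsPGroup p G)
    (h : CyclicallySeparable (powerGraph G)) : 3 ≤ diffNumber G := by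
  classical
  obtain ⟨S, hncon, u, v, hnreach, ⟨wu, hwu⟩, ⟨wv, hwv⟩⟩ := h
  have hcomp : ∀ a b : ↥Sᶜ, ((powerGraph G).induce Sᶜ).Adj a b →
      orderOf (b.val) ≤ orderOf (a.val) → (b.val) ∈ zpowers (a.val) := by
    intro a b hab hord
    have h2 : (a.val) ∈ zpowers (b.val) ∨ (b.val) ∈ zpowers (a.val) :=
      (hab : (powerGraph G).Adj a.val b.val).2
    exact aux_mem_zpowers_of_le h2.symm hord
  obtain ⟨a, b, c, hab, hac, hbc, hua, hub, huc, hmac, hmbc⟩ :=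
    aux_exists_triple Subtype.val hcomp wu hwu
  obtain ⟨d, e, f, hde, hdf, hef, hvd, hve, hvf, hmdf, hmef⟩ :=
    aux_exists_triple Subtype.val hcomp wv hwv
  obtain ⟨M, hM, hcM⟩ := aux_exists_maximalCyclic (c.val)
  obtain ⟨N, hN, hfN⟩ := aux_exists_maximalCyclic (f.val)
  obtain ⟨gM, hgM⟩ := hM.1
  obtain ⟨gN, hgN⟩ := hN.1
  have hfN' : f.val ∈ N := hfN (Subgroup.mem_zpowers _)
  have hcM' : c.val ∈ M := hcM (Subgroup.mem_zpowers _)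
  have hkey : ∀ x : ↥Sᶜ, ((powerGraph G).induce Sᶜ).Reachable u x → x.val ∉ N := by
    intro x hx hxN
    by_cases hxf : x.val = f.val
    · have hvx : ((powerGraph G).induce Sᶜ).Reachable v x := by
        rw [(Subtype.ext hxf : x = f)]; exact hvf
      exact hnreach (hx.trans hvx.symm)
    · have hadj : ((powerGraph G).induce Sᶜ).Adj x f := by
        show (powerGraph G).Adj x.val f.val
        refine ⟨hxf, aux_chain hp hG (z := gN) ?_ ?_⟩
        · rw [← hgN]; exact hxN
        · rw [← hgN]; exact hfN'
      exact hnreach ((hx.trans hadj.reachable).trans hvf.symm)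
  have hkey2 : ∀ x : ↥Sᶜ, ((powerGraph G).induce Sᶜ).Reachable v x → x.val ∉ M := by
    intro x hx hxM
    by_cases hxc : x.val = c.val
    · have hux : ((powerGraph G).induce Sᶜ).Reachable u x := by
        rw [(Subtype.ext hxc : x = c)]; exact huc
      exact hnreach (hux.trans hx.symm)
    · have hadj : ((powerGraph G).induce Sᶜ).Adj x c := by
        show (powerGraph G).Adj x.val c.val
        refine ⟨hxc, aux_chain hp hG (z := gM) ?_ ?_⟩
        · rw [← hgM]; exact hxM
        · rw [← hgM]; exact hcM'
      exact hnreach ((huc.trans hadj.reachable.symm).trans hx.symm)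
  have h1 : 3 ≤ ((M : Set G) \ (N : Set G)).ncard := by
    refine aux_three_le_ncard (Set.toFinite _)
      ((Set.mem_diff _).mpr ⟨hcM hmac, hkey a hua⟩)
      ((Set.mem_diff _).mpr ⟨hcM hmbc, hkey b hub⟩)
      ((Set.mem_diff _).mpr ⟨hcM', hkey c huc⟩) ?_ ?_ ?_
    · exact fun h' => hab (Subtype.ext h')
    · exact fun h' => hac (Subtype.ext h')
    · exact fun h' => hbc (Subtype.ext h')
  have h2 : 3 ≤ ((N : Set G) \ (M : Set G)).ncard := by
    refine aux_three_le_ncard (Set.toFinite _)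
      ((Set.mem_diff _).mpr ⟨hfN hmdf, hkey2 d hvd⟩)
      ((Set.mem_diff _).mpr ⟨hfN hmef, hkey2 e hve⟩)
      ((Set.mem_diff _).mpr ⟨hfN', hkey2 f hvf⟩) ?_ ?_ ?_
    · exact fun h' => hde (Subtype.ext h')
    · exact fun h' => hdf (Subtype.ext h')
    · exact fun h' => hef (Subtype.ext h')
  exact le_trans (le_min h1 h2) (aux_le_diffNumber hM hN)

lemma aux_impl_2_1 {p : ℕ} (hp : p.Prime) [Finite G] (hG : IsPGroup p G)
    (h : 3 ≤ diffNumber G) : CyclicallySeparable (powerGraph G) := by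
  classical
  obtain ⟨M, N, hM, hN, h1, h2⟩ := aux_of_diffNumber_ge h
  obtain ⟨gM, hgM⟩ := hM.1
  obtain ⟨gN, hgN⟩ := hN.1
  set D : Set G := (((M : Set G) \ (N : Set G)) ∪ ((N : Set G) \ (M : Set G))) with hD_def
  refine ⟨Dᶜ, ?_⟩
  unfold IsCyclicVertexCutset
  rw [compl_compl]
  obtain ⟨a, b, c, ha, hb, hc, hab, hac, hbc⟩ := aux_exists_three (Set.toFinite _) h1
  obtain ⟨d, e, f, hd, he, hf, hde, hdf, hef⟩ := aux_exists_three (Set.toFinite _) h2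
  have hMD : ∀ x, x ∈ (M : Set G) \ (N : Set G) → x ∈ D := fun x hx => Or.inl hx
  have hND : ∀ x, x ∈ (N : Set G) \ (M : Set G) → x ∈ D := fun x hx => Or.inr hx
  set u : ↥D := ⟨a, hMD a ha⟩ with hu_def
  set v : ↥D := ⟨d, hND d hd⟩ with hv_def
  have hpres : ∀ x y : ↥D, ((powerGraph G).induce D).Adj x y →
      x.val ∈ (M : Set G) \ (N : Set G) → y.val ∈ (M : Set G) \ (N : Set G) := by
    intro x y hxy hx
    rcases (y.prop : y.val ∈ ((M : Set G) \ (N : Set G)) ∪ ((N : Set G) \ (M : Set G)))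
      with hy | hy
    · exact hy
    · exfalso
      rcases (hxy : (powerGraph G).Adj x.val y.val).2 with h' | h'
      · exact hx.2 (Subgroup.zpowers_le.mpr hy.1 h')
      · exact hy.2 (Subgroup.zpowers_le.mpr hx.1 h')
  have hnr : ¬ ((powerGraph G).induce D).Reachable u v := by
    intro hr
    have := aux_pred_of_reachable hpres hr ha
    exact hd.2 this.1
  have hadjM : ∀ x y : G, x ∈ (M : Set G) → y ∈ (M : Set G) → x ≠ y →
      (powerGraph G).Adj x y := by
    intro x y hx hy hxy
    refine ⟨hxy, aux_chain hp hG (z := gM) ?_ ?_⟩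
    · rw [← hgM]; exact hx
    · rw [← hgM]; exact hy
  have hadjN : ∀ x y : G, x ∈ (N : Set G) → y ∈ (N : Set G) → x ≠ y →
      (powerGraph G).Adj x y := by
    intro x y hx hy hxy
    refine ⟨hxy, aux_chain hp hG (z := gN) ?_ ?_⟩
    · rw [← hgN]; exact hx
    · rw [← hgN]; exact hy
  refine ⟨fun hcon => hnr (hcon.preconnected u v), u, v, hnr, ?_, ?_⟩
  · refine aux_triangle (a := u) (b := ⟨b, hMD b hb⟩) (c := ⟨c, hMD c hc⟩) ?_ ?_ ?_
    · exact hadjM a b ha.1 hb.1 hab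
    · exact hadjM b c hb.1 hc.1 hbc
    · exact hadjM c a hc.1 ha.1 (Ne.symm hac)
  · refine aux_triangle (a := v) (b := ⟨e, hND e he⟩) (c := ⟨f, hND f hf⟩) ?_ ?_ ?_
    · exact hadjN d e hd.1 he.1 hde
    · exact hadjN e f he.1 hf.1 hef
    · exact hadjN f d hf.1 hd.1 (Ne.symm hdf)

end Impl


section Impl2

open Subgroup

variable {G : Type*} [Group G]

lemma aux_impl_2_3 {p : ℕ} (hp : p.Prime) [Finite G] (hG : IsPGroup p G)
    (h : 3 ≤ diffNumber G) :
    (3 < p ∧ ¬ IsCyclic G) ∨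
      (p = 3 ∧ ∃ M N : Subgroup G, IsMaximalCyclic M ∧ IsMaximalCyclic N ∧ M ≠ N ∧
        3 < Nat.card M ∧ 3 < Nat.card N) ∨
      (p = 2 ∧ ((∃ M N : Subgroup G, IsMaximalCyclic M ∧ IsMaximalCyclic N ∧ M ≠ N ∧
          4 < Nat.card M ∧ 4 < Nat.card N) ∨
        (∃ M N : Subgroup G, IsMaximalCyclic M ∧ IsMaximalCyclic N ∧ M ≠ N ∧
          2 < Nat.card M ∧ 2 < Nat.card N ∧ M ⊓ N = ⊥))) := by
  obtain ⟨M, N, hM, hN, h1, h2⟩ := aux_of_diffNumber_ge h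
  have e1 := aux_ncard_diff M N
  have e2 := aux_ncard_diff N M
  have hdeq : Nat.card (N ⊓ M : Subgroup G) = Nat.card (M ⊓ N : Subgroup G) := by
    rw [inf_comm]
  have hdpos := aux_card_inf_pos M N
  have hMN : M ≠ N := by
    rintro rfl
    rw [Set.diff_self] at h1
    simp [Set.ncard_empty] at h1
  have hm3 : 3 ≤ Nat.card M - Nat.card (M ⊓ N : Subgroup G) := by rw [← e1]; exact h1
  have hn3 : 3 ≤ Nat.card N - Nat.card (M ⊓ N : Subgroup G) := by
    rw [← hdeq, ← e2]; exact h2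
  by_cases h3 : 3 < p
  · refine Or.inl ⟨h3, ?_⟩
    intro hcyc
    obtain ⟨g, hg⟩ := hcyc.exists_generator
    have hMg : M = zpowers g := hM.2 _ ⟨g, rfl⟩ (fun x _ => hg x)
    have hNg : N = zpowers g := hN.2 _ ⟨g, rfl⟩ (fun x _ => hg x)
    exact hMN (hMg.trans hNg.symm)
  · have h2le := hp.two_le
    have h3le : p ≤ 3 := by omega
    interval_cases p
    · -- p = 2
      refine Or.inr (Or.inr ⟨rfl, ?_⟩)
      by_cases h44 : 4 < Nat.card M ∧ 4 < Nat.card N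
      · exact Or.inl ⟨M, N, hM, hN, hMN, h44.1, h44.2⟩
      · rw [not_and_or, not_lt, not_lt] at h44
        refine Or.inr ⟨M, N, hM, hN, hMN, by omega, by omega, ?_⟩
        exact (Subgroup.card_le_one_iff_eq_bot (M ⊓ N)).mp (by omega)
    · -- p = 3
      exact Or.inr (Or.inl ⟨rfl, M, N, hM, hN, hMN, by omega, by omega⟩)

lemma aux_impl_3_2 {p : ℕ} (hp : p.Prime) [Finite G] (hG : IsPGroup p G)
    (h : (3 < p ∧ ¬ IsCyclic G) ∨
      (p = 3 ∧ ∃ M N : Subgroup G, IsMaximalCyclic M ∧ IsMaximalCyclic N ∧ M ≠ N ∧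
        3 < Nat.card M ∧ 3 < Nat.card N) ∨
      (p = 2 ∧ ((∃ M N : Subgroup G, IsMaximalCyclic M ∧ IsMaximalCyclic N ∧ M ≠ N ∧
          4 < Nat.card M ∧ 4 < Nat.card N) ∨
        (∃ M N : Subgroup G, IsMaximalCyclic M ∧ IsMaximalCyclic N ∧ M ≠ N ∧
          2 < Nat.card M ∧ 2 < Nat.card N ∧ M ⊓ N = ⊥)))) :
    3 ≤ diffNumber G := by
  haveI := Fact.mk hp
  suffices hex : ∃ M N : Subgroup G, IsMaximalCyclic M ∧ IsMaximalCyclic N ∧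
      3 ≤ ((M : Set G) \ (N : Set G)).ncard ∧ 3 ≤ ((N : Set G) \ (M : Set G)).ncard by
    obtain ⟨M, N, hM, hN, h1, h2⟩ := hex
    exact le_trans (le_min h1 h2) (aux_le_diffNumber hM hN)
  rcases h with ⟨hp3, hncyc⟩ | ⟨rfl, M, N, hM, hN, hMN, hm, hn⟩ | ⟨rfl, hcase⟩
  · -- p > 3
    obtain ⟨M, hM, -⟩ := aux_exists_maximalCyclic (1 : G)
    obtain ⟨gM, hgM⟩ := hM.1
    have hex : ∃ x : G, x ∉ M := by
      by_contra hall
      push_neg at hall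
      exact hncyc ⟨⟨gM, fun x => by have := hall x; rwa [hgM] at this⟩⟩
    obtain ⟨x, hx⟩ := hex
    obtain ⟨N, hN, hxN⟩ := aux_exists_maximalCyclic x
    have hxN' : x ∈ N := hxN (Subgroup.mem_zpowers x)
    have hMnN : ¬ M ≤ N := fun hle => hx (by rw [hM.2 N hN.1 hle]; exact hxN')
    have hNnM : ¬ N ≤ M := fun hle => hx (hle hxN')
    have k1 := aux_p_mul_card_inf_le hp hG hMnN
    have k2 := aux_p_mul_card_inf_le hp hG hNnM
    have d1 := aux_card_inf_pos M N
    have d2 := aux_card_inf_pos N M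
    refine ⟨M, N, hM, hN, ?_, ?_⟩ <;> rw [aux_ncard_diff]
    · have h4 : 4 * Nat.card (M ⊓ N : Subgroup G) ≤ p * Nat.card (M ⊓ N : Subgroup G) :=
        Nat.mul_le_mul_right _ (by omega)
      omega
    · have h4 : 4 * Nat.card (N ⊓ M : Subgroup G) ≤ p * Nat.card (N ⊓ M : Subgroup G) :=
        Nat.mul_le_mul_right _ (by omega)
      omega
  · -- p = 3
    have hMnN : ¬ M ≤ N := fun hle => hMN (hM.2 N hN.1 hle)
    have hNnM : ¬ N ≤ M := fun hle => hMN (hN.2 M hM.1 hle).symm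
    have k1 := aux_p_mul_card_inf_le hp hG hMnN
    have k2 := aux_p_mul_card_inf_le hp hG hNnM
    have d1 := aux_card_inf_pos M N
    have d2 := aux_card_inf_pos N M
    exact ⟨M, N, hM, hN, by rw [aux_ncard_diff]; omega, by rw [aux_ncard_diff]; omega⟩
  · -- p = 2
    rcases hcase with ⟨M, N, hM, hN, hMN, hm, hn⟩ | ⟨M, N, hM, hN, hMN, hm, hn, hbot⟩
    · have hMnN : ¬ M ≤ N := fun hle => hMN (hM.2 N hN.1 hle)
      have hNnM : ¬ N ≤ M := fun hle => hMN (hN.2 M hM.1 hle).symm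
      have k1 := aux_p_mul_card_inf_le hp hG hMnN
      have k2 := aux_p_mul_card_inf_le hp hG hNnM
      have d1 := aux_card_inf_pos M N
      have d2 := aux_card_inf_pos N M
      exact ⟨M, N, hM, hN, by rw [aux_ncard_diff]; omega, by rw [aux_ncard_diff]; omega⟩
    · have hcard4 : ∀ K : Subgroup G, 2 < Nat.card K → 4 ≤ Nat.card K := by
        intro K hK
        obtain ⟨k, hk⟩ := IsPGroup.iff_card.mp (IsPGroup.to_subgroup hG K)
        have hk2 : 2 ≤ k := by
          by_contra hh
          push_neg at hh
          interval_cases k <;> omega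
        calc (4 : ℕ) = 2 ^ 2 := rfl
          _ ≤ 2 ^ k := Nat.pow_le_pow_right (by norm_num) hk2
          _ = Nat.card K := hk.symm
      have hdM : Nat.card (M ⊓ N : Subgroup G) = 1 := by
        rw [hbot]; exact Subgroup.card_bot
      have hdN : Nat.card (N ⊓ M : Subgroup G) = 1 := by
        rw [inf_comm, hbot]; exact Subgroup.card_bot
      have hm4 := hcard4 M hm
      have hn4 := hcard4 N hn
      exact ⟨M, N, hM, hN, by rw [aux_ncard_diff]; omega, by rw [aux_ncard_diff]; omega⟩

end Impl2


/-- Theorem 1.1: characterization of finite p-groups whose power graphs are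
cyclically separable. -/
theorem power_graph_cyclically_separable_tfae
    (p : ℕ) (hp : p.Prime) (G : Type*) [Group G] [Finite G] (hG : IsPGroup p G) :
    List.TFAE [
      CyclicallySeparable (powerGraph G),
      3 ≤ diffNumber G,
      (3 < p ∧ ¬ IsCyclic G) ∨
      (p = 3 ∧ ∃ M N : Subgroup G, IsMaximalCyclic M ∧ IsMaximalCyclic N ∧ M ≠ N ∧
        3 < Nat.card M ∧ 3 < Nat.card N) ∨
      (p = 2 ∧ ((∃ M N : Subgroup G, IsMaximalCyclic M ∧ IsMaximalCyclic N ∧ M ≠ N ∧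
          4 < Nat.card M ∧ 4 < Nat.card N) ∨
        (∃ M N : Subgroup G, IsMaximalCyclic M ∧ IsMaximalCyclic N ∧ M ≠ N ∧
          2 < Nat.card M ∧ 2 < Nat.card N ∧ M ⊓ N = ⊥)))] := by
  tfae_have 1 → 2 := aux_impl_1_2 hp hG
  tfae_have 2 → 1 := aux_impl_2_1 hp hG
  tfae_have 2 → 3 := aux_impl_2_3 hp hG
  tfae_have 3 → 2 := aux_impl_3_2 hp hG
  tfae_finish
end

section
/- For any finite group G, if ∂(G) ≥ 3, then the power graph P(G) is cyclically separable. -/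
open SimpleGraph in
private lemma triangle_isCycle_aux {V : Type*} {Γ : SimpleGraph V} {a b c : V}
    (hab : Γ.Adj a b) (hbc : Γ.Adj b c) (hca : Γ.Adj c a) :
    (Walk.cons hab (Walk.cons hbc (Walk.cons hca Walk.nil))).IsCycle := by
  have h1 := hab.ne
  have h2 := hbc.ne
  have h3 := hca.ne
  have h4 : a ≠ c := fun e => h3 e.symm
  simp [Walk.isCycle_def, Walk.isTrail_def, List.nodup_cons, Sym2.eq_iff]
  tauto

private lemma walk_pres_aux {V : Type*} {Γ : SimpleGraph V} (P : V → Prop)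
    (h : ∀ x y, Γ.Adj x y → (P x ↔ P y)) :
    ∀ {u v : V}, Γ.Walk u v → P u → P v := by
  intro u v w
  induction w with
  | nil => exact id
  | cons hadj p ih => exact fun hu => ih ((h _ _ hadj).mp hu)

/-- Lemma 2.3: for any finite group `G`, if `∂(G) ≥ 3` then `P(G)` is cyclically
separable. -/
theorem cyclically_separable_of_diffNumber_ge_three
    (G : Type*) [Group G] [Finite G] (h : 3 ≤ diffNumber G) :
    CyclicallySeparable (powerGraph G) := by
  classical
  set 𝒮 := { n : ℕ | ∃ M N : Subgroup G, IsMaximalCyclic M ∧ IsMaximalCyclic N ∧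
    n = min (((M : Set G) \ (N : Set G)).ncard) (((N : Set G) \ (M : Set G)).ncard) }
    with h𝒮
  have hbdd : BddAbove 𝒮 := by
    refine ⟨Nat.card G, fun n hn => ?_⟩
    obtain ⟨M, N, _, _, rfl⟩ := hn
    calc min (((M : Set G) \ (N : Set G)).ncard) (((N : Set G) \ (M : Set G)).ncard)
        ≤ ((M : Set G) \ (N : Set G)).ncard := min_le_left _ _
      _ ≤ (Set.univ : Set G).ncard := Set.ncard_le_ncard (Set.subset_univ _) Set.finite_univ
      _ = Nat.card G := Set.ncard_univ G
  have hne : 𝒮.Nonempty := by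
    by_contra hemp
    rw [Set.not_nonempty_iff_eq_empty] at hemp
    have : diffNumber G = 0 := by
      rw [diffNumber, ← h𝒮, hemp, csSup_empty]; rfl
    omega
  have hmem : diffNumber G ∈ 𝒮 := Nat.sSup_mem hne hbdd
  obtain ⟨M, N, hM, hN, heq⟩ := hmem
  have hMN3 : 3 ≤ ((M : Set G) \ (N : Set G)).ncard := le_trans h (heq ▸ min_le_left _ _)
  have hNM3 : 3 ≤ ((N : Set G) \ (M : Set G)).ncard := le_trans h (heq ▸ min_le_right _ _)
  have hMne : M ≠ N := by
    rintro rfl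
    rw [Set.diff_self, Set.ncard_empty] at hMN3
    omega
  obtain ⟨x, hMx⟩ := hM.1
  obtain ⟨y, hNy⟩ := hN.1
  -- basic side facts, stated symmetrically
  have side : ∀ (M N : Subgroup G) (x : G), M = Subgroup.zpowers x → M ≠ N →
      IsMaximalCyclic M → IsMaximalCyclic N →
      3 ≤ ((M : Set G) \ (N : Set G)).ncard →
      ∃ b c : G, x ∈ (M : Set G) \ N ∧ b ∈ (M : Set G) \ N ∧ c ∈ (M : Set G) \ N ∧
        (powerGraph G).Adj x b ∧ (powerGraph G).Adj b c ∧ (powerGraph G).Adj c x := by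
    intro M N x hMx hMne hM hN h3
    have hxM : x ∈ M := hMx ▸ Subgroup.mem_zpowers x
    have hxN : x ∉ N := by
      intro hxN
      exact hMne (hM.2 N hN.1 (hMx ▸ Subgroup.zpowers_le.mpr hxN))
    have hxA : x ∈ (M : Set G) \ N := ⟨hxM, hxN⟩
    have hxiA : x⁻¹ ∈ (M : Set G) \ N := by
      refine ⟨inv_mem hxM, fun hi => hxN ?_⟩
      simpa using inv_mem hi
    -- x ≠ x⁻¹ since |M| ≥ 3
    have hxne : x ≠ x⁻¹ := by
      intro hxe
      have hx2 : x ^ 2 = 1 := by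
        rw [pow_two, ← eq_inv_iff_mul_eq_one]; exact hxe
      have hord : orderOf x ≤ 2 :=
        Nat.le_of_dvd (by norm_num) (orderOf_dvd_of_pow_eq_one hx2)
      have hcard : ((M : Set G)).ncard = orderOf x := by
        rw [← Nat.card_coe_set_eq, hMx]
        exact Nat.card_zpowers x
      have h3' : 3 ≤ ((M : Set G)).ncard :=
        le_trans h3 (Set.ncard_le_ncard Set.diff_subset (Set.toFinite _))
      omega
    -- a third element
    have hnsub : ¬ ((M : Set G) \ N ⊆ {x, x⁻¹}) := by
      intro hsub
      have := Set.ncard_le_ncard hsub (Set.toFinite _)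
      have h2 : ({x, x⁻¹} : Set G).ncard ≤ 2 :=
        le_trans (Set.ncard_insert_le _ _) (by simp)
      omega
    obtain ⟨c, hcA, hcpair⟩ := Set.not_subset.mp hnsub
    simp only [Set.mem_insert_iff, Set.mem_singleton_iff, not_or] at hcpair
    obtain ⟨hcx, hcxi⟩ := hcpair
    have hcM : c ∈ Subgroup.zpowers x := hMx ▸ hcA.1
    refine ⟨x⁻¹, c, hxA, hxiA, hcA, ?_, ?_, ?_⟩
    · exact ⟨hxne, Or.inr (inv_mem (Subgroup.mem_zpowers x))⟩
    · exact ⟨fun e => hcxi e.symm, Or.inr (by rwa [Subgroup.zpowers_inv])⟩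
    · exact ⟨hcx, Or.inl hcM⟩
  obtain ⟨b₁, c₁, hx₁, hb₁, hc₁, e1, e2, e3⟩ := side M N x hMx hMne hM hN hMN3
  obtain ⟨b₂, c₂, hy₂, hb₂, hc₂, f1, f2, f3⟩ := side N M y hNy (Ne.symm hMne) hN hM hNM3
  -- the cutset
  refine ⟨((M : Set G) \ N ∪ (N : Set G) \ M)ᶜ, ?_⟩
  rw [IsCyclicVertexCutset, compl_compl]
  set A : Set G := (M : Set G) \ N with hA
  set B : Set G := (N : Set G) \ M with hB
  set Γ' := (powerGraph G).induce (A ∪ B) with hΓ'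
  -- adjacent vertices are on the same side
  have hsep : ∀ u v : ↥(A ∪ B), Γ'.Adj u v → ((u : G) ∈ A ↔ (v : G) ∈ A) := by
    rintro ⟨u, hu⟩ ⟨v, hv⟩ huv
    have hadj : (powerGraph G).Adj u v := huv
    have key : ∀ a b : G, a ∈ A → b ∈ B → (powerGraph G).Adj a b → False := by
      rintro a b ⟨haM, haN⟩ ⟨hbN, hbM⟩ ⟨-, hpow | hpow⟩
      · exact haN (Subgroup.zpowers_le.mpr hbN hpow)
      · exact hbM (Subgroup.zpowers_le.mpr haM hpow)
    simp only []
    rcases hu with hu | hu <;> rcases hv with hv | hv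
    · exact iff_of_true hu hv
    · exact absurd hadj (fun hadj => key u v hu hv hadj)
    · exact absurd hadj.symm (fun hadj => key v u hv hu hadj)
    · exact iff_of_false (fun h' => h'.2 hu.1) (fun h' => h'.2 hv.1)
  -- the two base vertices
  have hxAB : x ∈ A ∪ B := Or.inl hx₁
  have hyAB : y ∈ A ∪ B := Or.inr hy₂
  have hnr : ¬ Γ'.Reachable ⟨x, hxAB⟩ ⟨y, hyAB⟩ := by
    rintro ⟨w⟩
    have := walk_pres_aux (Γ := Γ') (fun u => (u : G) ∈ A) hsep w hx₁
    exact hy₂.2 this.1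
  refine ⟨fun hc => hnr (hc.preconnected _ _), ⟨x, hxAB⟩, ⟨y, hyAB⟩, hnr, ?_, ?_⟩
  · have E1 : Γ'.Adj ⟨x, hxAB⟩ ⟨b₁, Or.inl hb₁⟩ := e1
    have E2 : Γ'.Adj ⟨b₁, Or.inl hb₁⟩ ⟨c₁, Or.inl hc₁⟩ := e2
    have E3 : Γ'.Adj ⟨c₁, Or.inl hc₁⟩ ⟨x, hxAB⟩ := e3
    exact ⟨_, triangle_isCycle_aux E1 E2 E3⟩
  · have E1 : Γ'.Adj ⟨y, hyAB⟩ ⟨b₂, Or.inr hb₂⟩ := f1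
    have E2 : Γ'.Adj ⟨b₂, Or.inr hb₂⟩ ⟨c₂, Or.inr hc₂⟩ := f2
    have E3 : Γ'.Adj ⟨c₂, Or.inr hc₂⟩ ⟨y, hyAB⟩ := f3
    exact ⟨_, triangle_isCycle_aux E1 E2 E3⟩
end

section
/- Let p be a prime and G a finite p-group. Then ∂(G) ≥ 3 holds if G satisfies one of the following conditions: (a) p > 3 and G is non-cyclic; (b) p = 3 and G has at least two maximal cyclic subgroups of order greater than 3; (c) p = 2 and either G has at least two maximal cyclic subgroups of order greater than 4, or G has at least two maximal cyclic subgroups of order greater than 2 with trivial intersection. -/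
section Aux

variable {G : Type*} [Group G] [Finite G]

lemma card_le_of_le {H K : Subgroup G} (h : H ≤ K) : Nat.card H ≤ Nat.card K :=
  Nat.le_of_dvd Nat.card_pos (Subgroup.card_dvd_of_le h)

lemma exists_isMaximalCyclic_mem (x : G) :
    ∃ M : Subgroup G, IsMaximalCyclic M ∧ x ∈ M := by
  classical
  set s : Set (Subgroup G) := {N | (∃ y, N = Subgroup.zpowers y) ∧ x ∈ N} with hs_def
  have hs : s.Finite := Set.toFinite s
  have hne : s.Nonempty := ⟨Subgroup.zpowers x, ⟨x, rfl⟩, Subgroup.mem_zpowers x⟩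
  obtain ⟨M, hMs, hmax⟩ :=
    Set.Finite.exists_maximalFor (fun N : Subgroup G => Nat.card N) s hs hne
  refine ⟨M, ⟨hMs.1, ?_⟩, hMs.2⟩
  intro N hN hle
  have hNs : N ∈ s := ⟨hN, hle hMs.2⟩
  have hcard : Nat.card M = Nat.card N := le_antisymm (card_le_of_le hle) (hmax hNs (card_le_of_le hle))
  exact Subgroup.eq_of_le_of_card_ge hle hcard.ge

lemma prime_mul_card_inf_le {p : ℕ} (hp : p.Prime) (hG : IsPGroup p G)
    {M N : Subgroup G} (hM : IsMaximalCyclic M) (hN : ∃ y, N = Subgroup.zpowers y)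
    (hMN : M ≠ N) : p * Nat.card (M ⊓ N : Subgroup G) ≤ Nat.card M := by
  haveI : Fact p.Prime := ⟨hp⟩
  obtain ⟨k, hk⟩ := (hG.to_subgroup M).exists_card_eq
  have hdvd : Nat.card (M ⊓ N : Subgroup G) ∣ p ^ k := by
    rw [← hk]; exact Subgroup.card_dvd_of_le inf_le_left
  obtain ⟨j, hj, hje⟩ := (Nat.dvd_prime_pow hp).mp hdvd
  have hne : Nat.card (M ⊓ N : Subgroup G) ≠ Nat.card M := by
    intro hcard
    have heq : M ⊓ N = M := Subgroup.eq_of_le_of_card_ge inf_le_left hcard.ge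
    have hle : M ≤ N := by rw [← heq]; exact inf_le_right
    exact hMN (hM.2 N hN hle)
  have hjk : j < k := by
    rcases lt_or_eq_of_le hj with h | h
    · exact h
    · exact absurd (by rw [hje, h, hk]) hne
  calc p * Nat.card (M ⊓ N : Subgroup G) = p ^ (j + 1) := by rw [hje, pow_succ, mul_comm]
    _ ≤ p ^ k := Nat.pow_le_pow_right hp.pos hjk
    _ = Nat.card M := hk.symm

lemma ncard_coe_diff (M N : Subgroup G) :
    ((M : Set G) \ (N : Set G)).ncard = Nat.card M - Nat.card (M ⊓ N : Subgroup G) := by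
  have h1 : (M : Set G) \ (N : Set G)
      = (M : Set G) \ ((M ⊓ N : Subgroup G) : Set G) := by
    rw [Subgroup.coe_inf]
    ext g; simp only [Set.mem_diff, Set.mem_inter_iff]; tauto
  rw [h1, Set.ncard_diff (SetLike.coe_subset_coe.mpr inf_le_left) (Set.toFinite _),
    ← Nat.card_coe_set_eq, ← Nat.card_coe_set_eq]
  rfl

lemma key_pair {p : ℕ} (hp : p.Prime) (hG : IsPGroup p G)
    {M N : Subgroup G} (hM : IsMaximalCyclic M) (hN : IsMaximalCyclic N)
    (hMN : M ≠ N)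
    (harith : ∀ m n d : ℕ, 1 ≤ d → p * d ≤ m → p * d ≤ n →
      Nat.card M = m → Nat.card N = n → Nat.card (M ⊓ N : Subgroup G) = d →
      3 ≤ min (m - d) (n - d)) :
    3 ≤ diffNumber G := by
  set d := Nat.card (M ⊓ N : Subgroup G) with hd
  have h1 : p * d ≤ Nat.card M := prime_mul_card_inf_le hp hG hM hN.1 hMN
  have h2 : p * d ≤ Nat.card N := by
    have := prime_mul_card_inf_le hp hG hN hM.1 hMN.symm
    rwa [inf_comm] at this
  have hd1 : 1 ≤ d := Nat.card_pos
  have h3 : 3 ≤ min (Nat.card M - d) (Nat.card N - d) :=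
    harith _ _ _ hd1 h1 h2 rfl rfl rfl
  have hmem : min (((M : Set G) \ (N : Set G)).ncard) (((N : Set G) \ (M : Set G)).ncard)
      ∈ { n : ℕ | ∃ M N : Subgroup G, IsMaximalCyclic M ∧ IsMaximalCyclic N ∧
        n = min (((M : Set G) \ (N : Set G)).ncard) (((N : Set G) \ (M : Set G)).ncard) } :=
    ⟨M, N, hM, hN, rfl⟩
  have hbdd : BddAbove { n : ℕ | ∃ M N : Subgroup G, IsMaximalCyclic M ∧ IsMaximalCyclic N ∧
      n = min (((M : Set G) \ (N : Set G)).ncard) (((N : Set G) \ (M : Set G)).ncard) } := by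
    refine ⟨Nat.card G, fun n hn => ?_⟩
    obtain ⟨A, B, _, _, rfl⟩ := hn
    calc min (((A : Set G) \ (B : Set G)).ncard) (((B : Set G) \ (A : Set G)).ncard)
        ≤ ((A : Set G) \ (B : Set G)).ncard := min_le_left _ _
      _ ≤ (Set.univ : Set G).ncard := Set.ncard_le_ncard (Set.subset_univ _) (Set.toFinite _)
      _ = Nat.card G := Set.ncard_univ G
  have := le_csSup hbdd hmem
  refine le_trans ?_ this
  rw [ncard_coe_diff M N, ncard_coe_diff N M, inf_comm N M]
  exact h3

end Aux

/-- Lemma 2.4: sufficient conditions on a finite p-group for `∂(G) ≥ 3`. -/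
theorem diffNumber_ge_three_of_conditions
    (p : ℕ) (hp : p.Prime) (G : Type*) [Group G] [Finite G] (hG : IsPGroup p G)
    (h : (3 < p ∧ ¬ IsCyclic G) ∨
      (p = 3 ∧ ∃ M N : Subgroup G, IsMaximalCyclic M ∧ IsMaximalCyclic N ∧ M ≠ N ∧
        3 < Nat.card M ∧ 3 < Nat.card N) ∨
      (p = 2 ∧ ((∃ M N : Subgroup G, IsMaximalCyclic M ∧ IsMaximalCyclic N ∧ M ≠ N ∧
          4 < Nat.card M ∧ 4 < Nat.card N) ∨
        (∃ M N : Subgroup G, IsMaximalCyclic M ∧ IsMaximalCyclic N ∧ M ≠ N ∧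
          2 < Nat.card M ∧ 2 < Nat.card N ∧ M ⊓ N = ⊥)))) :
    3 ≤ diffNumber G := by
  rcases h with ⟨hp3, hnc⟩ | ⟨rfl, M, N, hM, hN, hMN, hm, hn⟩ | ⟨rfl, hc⟩
  · -- p > 3, G non-cyclic: find two distinct maximal cyclic subgroups
    obtain ⟨M, hM, _⟩ := exists_isMaximalCyclic_mem (1 : G)
    have hMtop : M ≠ ⊤ := by
      intro htop
      obtain ⟨y, hy⟩ := hM.1
      exact hnc ⟨⟨y, fun g => by
        have : g ∈ M := htop ▸ Subgroup.mem_top g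
        rwa [hy] at this⟩⟩
    obtain ⟨x, hx⟩ : ∃ x : G, x ∉ M := by
      by_contra hall
      push_neg at hall
      exact hMtop (Subgroup.eq_top_iff' M |>.mpr hall)
    obtain ⟨N, hN, hxN⟩ := exists_isMaximalCyclic_mem x
    have hMN : M ≠ N := fun h => hx (h ▸ hxN)
    refine key_pair hp hG hM hN hMN ?_
    intro m n d hd h1 h2 _ _ _
    have h4 : 4 * d ≤ m := le_trans (Nat.mul_le_mul_right d (by omega)) h1
    have h5 : 4 * d ≤ n := le_trans (Nat.mul_le_mul_right d (by omega)) h2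
    omega
  · refine key_pair hp hG hM hN hMN ?_
    intro m n d hd h1 h2 hcm hcn _
    rw [hcm] at hm; rw [hcn] at hn
    omega
  · rcases hc with ⟨M, N, hM, hN, hMN, hm, hn⟩ | ⟨M, N, hM, hN, hMN, hm, hn, hbot⟩
    · refine key_pair hp hG hM hN hMN ?_
      intro m n d hd h1 h2 hcm hcn _
      rw [hcm] at hm; rw [hcn] at hn
      omega
    · haveI : Fact (Nat.Prime 2) := ⟨hp⟩
      have hm4 : 4 ≤ Nat.card M := by
        obtain ⟨k, hk⟩ := (hG.to_subgroup M).exists_card_eq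
        rw [hk] at hm ⊢
        have : 2 ≤ k := by
          by_contra hk2
          interval_cases k <;> omega
        calc (4 : ℕ) = 2 ^ 2 := rfl
          _ ≤ 2 ^ k := Nat.pow_le_pow_right (by norm_num) this
      have hn4 : 4 ≤ Nat.card N := by
        obtain ⟨k, hk⟩ := (hG.to_subgroup N).exists_card_eq
        rw [hk] at hn ⊢
        have : 2 ≤ k := by
          by_contra hk2
          interval_cases k <;> omega
        calc (4 : ℕ) = 2 ^ 2 := rfl
          _ ≤ 2 ^ k := Nat.pow_le_pow_right (by norm_num) this
      refine key_pair hp hG hM hN hMN ?_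
      intro m n d hd h1 h2 hcm hcn hcd
      rw [hcm] at hm4; rw [hcn] at hn4
      rw [hbot, Subgroup.card_bot] at hcd
      omega
end

section
/- Let D40 = ⟨a, b | a^20 = b^2 = e, ab = ba^{-1}⟩ be the dihedral group of order 40. Then the power graph P(D40) is cyclically separable, yet ∂(D40) = 1. In particular, the converse of the implication '∂(G) ≥ 3 implies P(G) is cyclically separable' fails for general finite groups. -/
section D40Aux
open DihedralGroup

lemma r_pow_nat (i : ZMod 20) (k : ℕ) :
    (r i : DihedralGroup 20) ^ k = r ((k : ZMod 20) * i) := by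
  induction k with
  | zero => simp [one_def, -r_zero]
  | succ n ih =>
      rw [pow_succ, ih, r_mul_r]
      congr 1
      push_cast
      ring

lemma mem_zpowers_r_iff (i : ZMod 20) (x : DihedralGroup 20) :
    x ∈ Subgroup.zpowers (r i) ↔ ∃ c : ZMod 20, r (c * i) = x := by
  constructor
  · intro h
    rw [← mem_powers_iff_mem_zpowers, Submonoid.mem_powers_iff] at h
    obtain ⟨n, hn⟩ := h
    exact ⟨n, by rw [← r_pow_nat]; exact hn⟩
  · rintro ⟨c, rfl⟩
    refine ⟨(c.val : ℤ), ?_⟩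
    show (r i : DihedralGroup 20) ^ ((c.val : ℤ)) = _
    rw [zpow_natCast, r_pow_nat]
    congr 2
    rw [ZMod.natCast_val, ZMod.cast_id]

/-- The vertex set kept: a triangle {r5,r10,r15} and a clique {r4,r8,r12,r16}. -/
def Tset : Set (DihedralGroup 20) :=
  {x | x = r 4 ∨ x = r 8 ∨ x = r 12 ∨ x = r 16 ∨ x = r 5 ∨ x = r 10 ∨ x = r 15}

lemma mem_Tcc {x : DihedralGroup 20} (h : x ∈ Tset) : x ∈ Tsetᶜᶜ := fun h2 => h2 h

lemma of_mem_Tcc {x : DihedralGroup 20} (h : x ∈ Tsetᶜᶜ) : x ∈ Tset := not_not.1 h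

lemma reach_inv {V : Type*} {Γ : SimpleGraph V} (P : V → Prop)
    (h : ∀ x y, Γ.Adj x y → P x → P y) {u v : V} (hr : Γ.Reachable u v) (hu : P u) : P v := by
  obtain ⟨w⟩ := hr
  induction w with
  | nil => exact hu
  | cons a _ ih => exact ih (h _ _ a hu)

/-- No adjacency between the order-5 clique and the triangle part. -/
lemma no_cross {i j : ZMod 20}
    (hi : i = 4 ∨ i = 8 ∨ i = 12 ∨ i = 16) (hj : j = 5 ∨ j = 10 ∨ j = 15) :
    ¬ (powerGraph (DihedralGroup 20)).Adj (r i) (r j) := by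
  rintro ⟨hne, h | h⟩ <;> rw [mem_zpowers_r_iff] at h <;> obtain ⟨c, hc⟩ := h <;>
    have hcc := r.inj hc <;> revert hcc <;> revert c <;>
    rcases hi with rfl | rfl | rfl | rfl <;> rcases hj with rfl | rfl | rfl <;> decide

lemma adj_rr {i j : ZMod 20} (hne : i ≠ j) (c : ZMod 20) (hc : c * i = j) :
    (powerGraph (DihedralGroup 20)).Adj (r i) (r j) := by
  refine ⟨by simp [hne], Or.inr ?_⟩
  rw [mem_zpowers_r_iff]
  exact ⟨c, by rw [hc]⟩

abbrev Gam := powerGraph (DihedralGroup 20)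
abbrev Gam' := Gam.induce Tsetᶜᶜ

def u4 : ↥Tsetᶜᶜ := ⟨r 4, mem_Tcc (Or.inl rfl)⟩
def u8 : ↥Tsetᶜᶜ := ⟨r 8, mem_Tcc (Or.inr (Or.inl rfl))⟩
def u12 : ↥Tsetᶜᶜ := ⟨r 12, mem_Tcc (Or.inr (Or.inr (Or.inl rfl)))⟩
def u5 : ↥Tsetᶜᶜ := ⟨r 5, mem_Tcc (Or.inr (Or.inr (Or.inr (Or.inr (Or.inl rfl)))))⟩
def u10 : ↥Tsetᶜᶜ := ⟨r 10, mem_Tcc (Or.inr (Or.inr (Or.inr (Or.inr (Or.inr (Or.inl rfl))))))⟩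
def u15 : ↥Tsetᶜᶜ := ⟨r 15, mem_Tcc (Or.inr (Or.inr (Or.inr (Or.inr (Or.inr (Or.inr rfl))))))⟩

lemma step : ∀ x y : ↥Tsetᶜᶜ, Gam'.Adj x y →
    (x.1 = r 4 ∨ x.1 = r 8 ∨ x.1 = r 12 ∨ x.1 = r 16) →
    (y.1 = r 4 ∨ y.1 = r 8 ∨ y.1 = r 12 ∨ y.1 = r 16) := by
  intro x y hadj hx
  have hadj' : Gam.Adj x.1 y.1 := hadj
  rcases of_mem_Tcc y.2 with hy | hy | hy | hy | hy | hy | hy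
  · exact Or.inl hy
  · exact Or.inr (Or.inl hy)
  · exact Or.inr (Or.inr (Or.inl hy))
  · exact Or.inr (Or.inr (Or.inr hy))
  all_goals
    exfalso
    rw [hy] at hadj'
    rcases hx with hx | hx | hx | hx <;> rw [hx] at hadj' <;>
      exact no_cross (by simp) (by simp) hadj'

lemma not_reach : ¬ Gam'.Reachable u4 u5 := by
  intro h
  have := reach_inv (fun z : ↥Tsetᶜᶜ => z.1 = r 4 ∨ z.1 = r 8 ∨ z.1 = r 12 ∨ z.1 = r 16)
    step h (Or.inl rfl)
  rcases this with h | h | h | h <;> exact absurd (r.inj h) (by decide)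

lemma a48 : Gam'.Adj u4 u8 := adj_rr (by decide) 2 (by decide)
lemma a812 : Gam'.Adj u8 u12 := adj_rr (by decide) 4 (by decide)
lemma a124 : Gam'.Adj u12 u4 := adj_rr (by decide) 7 (by decide)
lemma a510 : Gam'.Adj u5 u10 := adj_rr (by decide) 2 (by decide)
lemma a1015 : Gam'.Adj u10 u15 := (adj_rr (i := 15) (j := 10) (by decide) 2 (by decide)).symm
lemma a155 : Gam'.Adj u15 u5 := adj_rr (by decide) 3 (by decide)

lemma cycle4 : ∃ w : Gam'.Walk u4 u4, w.IsCycle := by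
  refine ⟨.cons a48 (.cons a812 (.cons a124 .nil)), ?_⟩
  rw [SimpleGraph.Walk.isCycle_def]
  exact ⟨⟨by decide⟩, by simp, by decide⟩

lemma cycle5 : ∃ w : Gam'.Walk u5 u5, w.IsCycle := by
  refine ⟨.cons a510 (.cons a1015 (.cons a155 .nil)), ?_⟩
  rw [SimpleGraph.Walk.isCycle_def]
  exact ⟨⟨by decide⟩, by simp, by decide⟩

lemma mem_zpowers_sr_iff (i : ZMod 20) (x : DihedralGroup 20) :
    x ∈ Subgroup.zpowers (sr i) ↔ x = 1 ∨ x = sr i := by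
  rw [mem_zpowers_iff_mem_range_orderOf, orderOf_sr]
  constructor
  · intro h
    simp only [Finset.mem_image, Finset.mem_range] at h
    obtain ⟨n, hn, rfl⟩ := h
    interval_cases n
    · left; rfl
    · right; rw [pow_one]
  · rintro (rfl | rfl)
    · exact Finset.mem_image.2 ⟨0, by simp⟩
    · exact Finset.mem_image.2 ⟨1, by simp⟩

lemma zpowers_sr_le (i : ZMod 20) {y : DihedralGroup 20}
    (h : Subgroup.zpowers (sr i) ≤ Subgroup.zpowers y) :
    Subgroup.zpowers y = Subgroup.zpowers (sr i) := by
  have hm : sr i ∈ Subgroup.zpowers y := h (Subgroup.mem_zpowers _)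
  cases y with
  | r j =>
      rw [mem_zpowers_r_iff] at hm
      obtain ⟨c, hc⟩ := hm
      exact absurd hc (by simp)
  | sr j =>
      rw [mem_zpowers_sr_iff] at hm
      rcases hm with hm | hm
      · exact absurd hm (by simp [one_def, -r_zero])
      · rw [sr.inj hm]

lemma maximal_sr (i : ZMod 20) : IsMaximalCyclic (Subgroup.zpowers (sr i)) := by
  refine ⟨⟨sr i, rfl⟩, ?_⟩
  rintro N ⟨y, rfl⟩ hle
  exact (zpowers_sr_le i hle).symm

lemma r_mem_zpowers_r_one (i : ZMod 20) :
    (r i : DihedralGroup 20) ∈ Subgroup.zpowers (r 1) := by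
  rw [mem_zpowers_r_iff]
  exact ⟨i, by rw [mul_one]⟩

lemma diff_sr_le (i : ZMod 20) (N : Subgroup (DihedralGroup 20)) :
    (((Subgroup.zpowers (sr i) : Subgroup (DihedralGroup 20)) : Set (DihedralGroup 20)) \
      (N : Set (DihedralGroup 20))).ncard ≤ 1 := by
  have hsub : ((Subgroup.zpowers (sr i) : Subgroup (DihedralGroup 20)) : Set (DihedralGroup 20)) \
      (N : Set (DihedralGroup 20)) ⊆ {sr i} := by
    rintro x ⟨hx, hxn⟩
    rw [SetLike.mem_coe, mem_zpowers_sr_iff] at hx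
    rcases hx with rfl | rfl
    · exact absurd N.one_mem hxn
    · rfl
  calc _ ≤ ({sr i} : Set (DihedralGroup 20)).ncard :=
        Set.ncard_le_ncard hsub (Set.finite_singleton _)
    _ = 1 := Set.ncard_singleton _

lemma diffNumber_D40 : diffNumber (DihedralGroup 20) = 1 := by
  have hub : ∀ n ∈ { n : ℕ | ∃ M N : Subgroup (DihedralGroup 20), IsMaximalCyclic M ∧
      IsMaximalCyclic N ∧
      n = min (((M : Set (DihedralGroup 20)) \ N).ncard) (((N : Set (DihedralGroup 20)) \ M).ncard) },
      n ≤ 1 := by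
    rintro n ⟨M, N, hM, hN, rfl⟩
    obtain ⟨x, rfl⟩ := hM.1
    obtain ⟨y, hNy⟩ := hN.1
    cases x with
    | sr i => exact le_trans (min_le_left _ _) (diff_sr_le i N)
    | r i =>
        have hMx : Subgroup.zpowers (r i) = Subgroup.zpowers (r 1 : DihedralGroup 20) := by
          apply hM.2 _ ⟨r 1, rfl⟩
          rw [Subgroup.zpowers_le]
          exact r_mem_zpowers_r_one i
        subst hNy
        cases y with
        | sr j => exact le_trans (min_le_right _ _) (diff_sr_le j _)
        | r j =>
            have hNx : Subgroup.zpowers (r j) = Subgroup.zpowers (r 1 : DihedralGroup 20) := by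
              apply hN.2 _ ⟨r 1, rfl⟩
              rw [Subgroup.zpowers_le]
              exact r_mem_zpowers_r_one j
            rw [hMx, hNx]
            simp
  have hmem : 1 ∈ { n : ℕ | ∃ M N : Subgroup (DihedralGroup 20), IsMaximalCyclic M ∧
      IsMaximalCyclic N ∧
      n = min (((M : Set (DihedralGroup 20)) \ N).ncard) (((N : Set (DihedralGroup 20)) \ M).ncard) } := by
    refine ⟨Subgroup.zpowers (sr 0), Subgroup.zpowers (sr 1), maximal_sr 0, maximal_sr 1, ?_⟩
    have h01 : ((Subgroup.zpowers (sr (0:ZMod 20)) : Subgroup (DihedralGroup 20)) :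
        Set (DihedralGroup 20)) \ (Subgroup.zpowers (sr (1:ZMod 20)) : Subgroup (DihedralGroup 20))
        = {sr 0} := by
      ext x
      simp only [Set.mem_diff, SetLike.mem_coe, mem_zpowers_sr_iff, Set.mem_singleton_iff]
      constructor
      · rintro ⟨h1 | h1, h2⟩
        · exact absurd (Or.inl h1) h2
        · exact h1
      · rintro rfl
        refine ⟨Or.inr rfl, ?_⟩
        rintro (h | h)
        · exact absurd h (by simp [one_def, -r_zero])
        · exact absurd (sr.inj h) (by decide)
    have h10 : ((Subgroup.zpowers (sr (1:ZMod 20)) : Subgroup (DihedralGroup 20)) :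
        Set (DihedralGroup 20)) \ (Subgroup.zpowers (sr (0:ZMod 20)) : Subgroup (DihedralGroup 20))
        = {sr 1} := by
      ext x
      simp only [Set.mem_diff, SetLike.mem_coe, mem_zpowers_sr_iff, Set.mem_singleton_iff]
      constructor
      · rintro ⟨h1 | h1, h2⟩
        · exact absurd (Or.inl h1) h2
        · exact h1
      · rintro rfl
        refine ⟨Or.inr rfl, ?_⟩
        rintro (h | h)
        · exact absurd h (by simp [one_def, -r_zero])
        · exact absurd (sr.inj h) (by decide)
    rw [h01, h10, Set.ncard_singleton, Set.ncard_singleton, min_self]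
  apply le_antisymm
  · exact csSup_le ⟨1, hmem⟩ hub
  · exact le_csSup ⟨1, hub⟩ hmem

theorem D40_cyclically_separable : CyclicallySeparable (powerGraph (DihedralGroup 20)) := by
  classical
  refine ⟨Tsetᶜ, fun h => not_reach (h.preconnected u4 u5), u4, u5, not_reach, cycle4, cycle5⟩

end D40Aux

/-- The power graph of the dihedral group `D40` of order 40 is cyclically separable,
yet `∂(D40) = 1`; so the converse of `∂(G) ≥ 3 → P(G)` cyclically separable fails
for general finite groups. -/

theorem dihedral_forty_cyclically_separable_and_diffNumber_one :
    CyclicallySeparable (powerGraph (DihedralGroup 20)) ∧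
    diffNumber (DihedralGroup 20) = 1 :=
  ⟨D40_cyclically_separable, diffNumber_D40⟩
end

section
/- Let G be a finite non-cyclic 3-group having at most one maximal cyclic subgroup of order greater than 3. Then the power graph P(G) has no cyclic vertex cutset, i.e., P(G) is not cyclically separable. -/
open Subgroup

lemma aux_cyclic_compare {G : Type*} [Group G] [Finite G] {g y1 y2 : G}
    (h1 : y1 ∈ zpowers g) (h2 : y2 ∈ zpowers g) (hd : orderOf y1 ∣ orderOf y2) :
    y1 ∈ zpowers y2 := by
  classical
  let C := ↥(zpowers g)
  haveI : Fintype C := Fintype.ofFinite C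
  haveI : IsCyclic C := ⟨⟨⟨g, mem_zpowers g⟩, by
    rintro ⟨x, k, rfl⟩
    exact ⟨k, by ext; rw [SubgroupClass.coe_zpow]⟩⟩⟩
  set a : C := ⟨y1, h1⟩ with ha
  set b : C := ⟨y2, h2⟩ with hb
  have hoa : orderOf a = orderOf y1 := orderOf_mk _ _
  have hob : orderOf b = orderOf y2 := orderOf_mk _ _
  have hbpos : 0 < orderOf b := by
    have : IsOfFinOrder b := isOfFinOrder_of_finite b
    exact this.orderOf_pos
  have hle : (Finset.filter (fun x : C => x ^ (orderOf b) = 1) Finset.univ).card ≤ orderOf b := by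
    simpa using IsCyclic.card_pow_eq_one_le (α := C) hbpos
  have hsub : ((zpowers b : Subgroup C) : Set C).toFinset ⊆
      Finset.filter (fun x : C => x ^ (orderOf b) = 1) Finset.univ := by
    intro x hx
    simp only [Set.mem_toFinset, SetLike.mem_coe] at hx
    simp only [Finset.mem_filter, Finset.mem_univ, true_and]
    exact orderOf_dvd_iff_pow_eq_one.mp (orderOf_dvd_of_mem_zpowers hx)
  have hcard : ((zpowers b : Subgroup C) : Set C).toFinset.card = orderOf b := by
    rw [Set.toFinset_card]
    rw [← Nat.card_eq_fintype_card]
    exact Nat.card_zpowers b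
  have heq : ((zpowers b : Subgroup C) : Set C).toFinset =
      Finset.filter (fun x : C => x ^ (orderOf b) = 1) Finset.univ :=
    Finset.eq_of_subset_of_card_le hsub (by omega)
  have hamem : a ∈ (zpowers b : Subgroup C) := by
    have : a ∈ Finset.filter (fun x : C => x ^ (orderOf b) = 1) Finset.univ := by
      simp only [Finset.mem_filter, Finset.mem_univ, true_and]
      apply orderOf_dvd_iff_pow_eq_one.mp
      rw [hoa, hob]; exact hd
    rw [← heq] at this
    simpa using this
  obtain ⟨k, hk⟩ := hamem
  exact ⟨k, by have := congrArg (Subtype.val) hk; simp only [SubgroupClass.coe_zpow] at this; exact this⟩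

lemma exists_maximal_cyclic {G : Type*} [Group G] [Finite G] (x : G) :
    ∃ M : Subgroup G, IsMaximalCyclic M ∧ x ∈ M := by
  have hfin : ({N : Subgroup G | (∃ y, N = Subgroup.zpowers y) ∧ Subgroup.zpowers x ≤ N}).Finite :=
    Set.toFinite _
  obtain ⟨M, hM, hmax⟩ := Set.Finite.exists_maximalFor id _ hfin
    ⟨Subgroup.zpowers x, ⟨x, rfl⟩, le_rfl⟩
  refine ⟨M, ⟨hM.1, fun N hN hle => ?_⟩, hM.2 (Subgroup.mem_zpowers x)⟩
  exact le_antisymm hle (hmax ⟨hN, le_trans hM.2 hle⟩ hle)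

lemma zpowers_eq_of_adj {G : Type*} [Group G] [Finite G] {x y : G}
    (hx : orderOf x = 3) (hy : orderOf y = 3)
    (hadj : x ∈ zpowers y ∨ y ∈ zpowers x) : zpowers x = zpowers y := by
  have cx : Nat.card (zpowers x) = 3 := by rw [Nat.card_zpowers, hx]
  have cy : Nat.card (zpowers y) = 3 := by rw [Nat.card_zpowers, hy]
  rcases hadj with h | h
  · exact (Subgroup.eq_of_le_of_card_ge (zpowers_le.mpr h) (by omega)).symm ▸ rfl
  · exact Subgroup.eq_of_le_of_card_ge (zpowers_le.mpr h) (by omega) ▸ rfl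

lemma walk_zpowers_eq {G : Type*} [Group G] [Finite G] {S : Set G}
    {a b : ↥Sᶜ} (p : ((powerGraph G).induce Sᶜ).Walk a b)
    (hall : ∀ v ∈ p.support, orderOf (v : G) = 3) :
    zpowers (b : G) = zpowers (a : G) := by
  induction p with
  | nil => rfl
  | cons h p ih =>
    rename_i u c d
    have h1 : orderOf (u : G) = 3 := hall u (by simp)
    have h2 : orderOf (c : G) = 3 := hall c (by simp [SimpleGraph.Walk.start_mem_support])
    have := ih (fun v hv => hall v (by simp [hv]))
    rw [this]
    exact (zpowers_eq_of_adj h1 h2 (show (u : G) ≠ c ∧ ((u : G) ∈ zpowers (c : G) ∨ (c : G) ∈ zpowers (u : G)) from h).2).symm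

lemma cycle_big_elem {G : Type*} [Group G] [Finite G] (hG : IsPGroup 3 G) {S : Set G}
    (h1S : (1 : G) ∈ S) {u : ↥Sᶜ} (w : ((powerGraph G).induce Sᶜ).Walk u u)
    (hw : w.IsCycle) :
    ∃ v : ↥Sᶜ, ((powerGraph G).induce Sᶜ).Reachable u v ∧ 3 < orderOf (v : G) := by
  classical
  by_contra hcon
  push_neg at hcon
  -- every support vertex has order exactly 3
  have horder : ∀ v ∈ w.support, orderOf (v : G) = 3 := by
    intro v hv
    have hr : ((powerGraph G).induce Sᶜ).Reachable u v := ⟨w.takeUntil v hv⟩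
    have hle : orderOf (v : G) ≤ 3 := hcon v hr
    obtain ⟨k, hk⟩ := (IsPGroup.iff_orderOf.mp hG) (v : G)
    have hne : (v : G) ≠ 1 := by
      intro he
      exact v.2 (he ▸ h1S)
    have hne1 : orderOf (v : G) ≠ 1 := fun he => hne (orderOf_eq_one_iff.mp he)
    match k, hk with
    | 0, hk => exact absurd (by simpa using hk) hne1
    | 1, hk => simpa using hk
    | (k+2), hk =>
      exfalso
      have : 3 ^ 2 ≤ 3 ^ (k + 2) := Nat.pow_le_pow_right (by norm_num) (by omega)
      omega
  -- now derive contradiction: all vertices in zpowers u, too few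
  have hzp : ∀ v ∈ w.support, (v : G) ∈ zpowers (u : G) := by
    intro v hv
    have := walk_zpowers_eq (w.takeUntil v hv)
      (fun x hx => horder x (w.support_takeUntil_subset hv hx))
    rw [← this]
    exact mem_zpowers _
  have hne1 : ∀ v ∈ w.support, (v : G) ≠ 1 := fun v hv he => v.2 (he ▸ h1S)
  -- the set A = zpowers u \ {1} has ncard 2
  have hcardu : Nat.card (zpowers (u : G)) = 3 := by
    rw [Nat.card_zpowers]; exact horder u w.start_mem_support
  have hA : Set.ncard ((zpowers (u : G) : Set G) \ {1}) = 2 := by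
    rw [Set.ncard_diff_singleton_of_mem (one_mem _)]
    have : (zpowers (u : G) : Set G).ncard = 3 := by
      rw [← Nat.card_coe_set_eq]; exact hcardu
    omega
  -- tail of support: nodup list of length ≥ 3 mapping into A
  have hnodup : (w.support.tail.map (Subtype.val)).Nodup :=
    hw.2.map Subtype.val_injective
  have hlen : 3 ≤ (w.support.tail.map (Subtype.val)).length := by
    rw [List.length_map, List.length_tail, SimpleGraph.Walk.length_support]
    have := hw.three_le_length
    omega
  have hsubA : ∀ x ∈ (w.support.tail.map (Subtype.val)),
      x ∈ ((zpowers (u : G) : Set G) \ {1}) := by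
    intro x hx
    obtain ⟨v, hv, rfl⟩ := List.mem_map.mp hx
    have hvm : v ∈ w.support := List.mem_of_mem_tail hv
    exact ⟨hzp v hvm, hne1 v hvm⟩
  have h3le : 3 ≤ Set.ncard ((zpowers (u : G) : Set G) \ {1}) := by
    classical
    have hfin : ((zpowers (u : G) : Set G) \ {1}).Finite := Set.toFinite _
    calc 3 ≤ (w.support.tail.map (Subtype.val)).toFinset.card := by
              rw [List.toFinset_card_of_nodup hnodup]; exact hlen
      _ ≤ hfin.toFinset.card := Finset.card_le_card (by
              intro x hx
              rw [Set.Finite.mem_toFinset]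
              exact hsubA x (List.mem_toFinset.mp hx))
      _ = Set.ncard _ := (Set.ncard_eq_toFinset_card _ hfin).symm
  omega

/-- A finite non-cyclic 3-group with at most one maximal cyclic subgroup of order
greater than 3 has a power graph that is not cyclically separable. -/
theorem three_group_not_cyclically_separable
    (G : Type*) [Group G] [Finite G] (hG : IsPGroup 3 G) (hnc : ¬ IsCyclic G)
    (h : ∀ M N : Subgroup G, IsMaximalCyclic M → IsMaximalCyclic N →
      3 < Nat.card M → 3 < Nat.card N → M = N) :
    ¬ CyclicallySeparable (powerGraph G) := by
  rintro ⟨S, hdisc, u, v, hreach, ⟨wu, hwu⟩, ⟨wv, hwv⟩⟩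
  -- the identity must be in S
  have h1S : (1 : G) ∈ S := by
    by_contra h1
    apply hreach
    have hone : (1 : G) ∈ Sᶜ := h1
    set one : ↥Sᶜ := ⟨1, hone⟩ with hone'
    have adj1 : ∀ a : ↥Sᶜ, (a : G) ≠ 1 → ((powerGraph G).induce Sᶜ).Adj a one := by
      intro a ha
      exact (⟨ha, Or.inr (one_mem _)⟩ : (a : G) ≠ 1 ∧ ((a : G) ∈ zpowers (1 : G) ∨ (1 : G) ∈ zpowers (a : G)))
    have r1 : ((powerGraph G).induce Sᶜ).Reachable u one := by
      by_cases hu1 : (u : G) = 1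
      · rw [show u = one from Subtype.ext hu1]
      · exact (adj1 u hu1).reachable
    have r2 : ((powerGraph G).induce Sᶜ).Reachable v one := by
      by_cases hv1 : (v : G) = 1
      · rw [show v = one from Subtype.ext hv1]
      · exact (adj1 v hv1).reachable
    exact r1.trans r2.symm
  obtain ⟨y1, hry1, hoy1⟩ := cycle_big_elem hG h1S wu hwu
  obtain ⟨y2, hry2, hoy2⟩ := cycle_big_elem hG h1S wv hwv
  obtain ⟨M1, hM1, hy1⟩ := exists_maximal_cyclic (y1 : G)
  obtain ⟨M2, hM2, hy2⟩ := exists_maximal_cyclic (y2 : G)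
  have hc1 : 3 < Nat.card M1 := by
    have := Subgroup.card_le_of_le (zpowers_le.mpr hy1)
    rw [Nat.card_zpowers] at this
    omega
  have hc2 : 3 < Nat.card M2 := by
    have := Subgroup.card_le_of_le (zpowers_le.mpr hy2)
    rw [Nat.card_zpowers] at this
    omega
  have hMM : M1 = M2 := h M1 M2 hM1 hM2 hc1 hc2
  obtain ⟨g, hg⟩ := hM1.1
  have hgy1 : (y1 : G) ∈ zpowers g := hg ▸ hy1
  have hgy2 : (y2 : G) ∈ zpowers g := hg ▸ (hMM ▸ hy2)
  obtain ⟨i, hi⟩ := IsPGroup.iff_orderOf.mp hG (y1 : G)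
  obtain ⟨j, hj⟩ := IsPGroup.iff_orderOf.mp hG (y2 : G)
  have hcomp : (y1 : G) ∈ zpowers (y2 : G) ∨ (y2 : G) ∈ zpowers (y1 : G) := by
    rcases le_total i j with hij | hij
    · exact Or.inl (aux_cyclic_compare hgy1 hgy2 (by rw [hi, hj]; exact pow_dvd_pow 3 hij))
    · exact Or.inr (aux_cyclic_compare hgy2 hgy1 (by rw [hi, hj]; exact pow_dvd_pow 3 hij))
  have ryy : ((powerGraph G).induce Sᶜ).Reachable y1 y2 := by
    by_cases hyy : (y1 : G) = (y2 : G)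
    · rw [show y1 = y2 from Subtype.ext hyy]
    · exact SimpleGraph.Adj.reachable (G := (powerGraph G).induce Sᶜ) (⟨hyy, hcomp⟩ : (y1 : G) ≠ y2 ∧ _)
  exact hreach (hry1.trans (ryy.trans hry2.symm))
end

section
/- Let p be a prime and G a finite p-group having two maximal cyclic subgroups M1 and M2 with trivial intersection such that |M1| ≥ 4 and |M2| ≥ 4. Then {e} is a cyclic vertex cutset of the power graph P(G), and consequently κ(P(G)) = cκ(P(G)) = 1. -/
section MyAux
variable {G : Type*} [Group G]

lemma my_zpowers_isCyclic (y : G) : IsCyclic (Subgroup.zpowers y) := by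
  refine ⟨⟨⟨y, Subgroup.mem_zpowers y⟩, fun x => ?_⟩⟩
  obtain ⟨k, hk⟩ := x.2
  exact ⟨k, Subtype.ext (by simpa using hk)⟩

lemma my_exists_order_p {p : ℕ} (hp : p.Prime) [Finite G] (hG : IsPGroup p G)
    {x : G} (hx : x ≠ 1) : ∃ w : G, w ∈ Subgroup.zpowers x ∧ orderOf w = p := by
  haveI : Fact p.Prime := ⟨hp⟩
  haveI : Fintype (Subgroup.zpowers x) := Fintype.ofFinite _
  have hpg : IsPGroup p (Subgroup.zpowers x) := IsPGroup.to_subgroup hG _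
  obtain ⟨n, hn⟩ := (IsPGroup.iff_card).mp hpg
  have hn0 : n ≠ 0 := by
    intro h
    subst h
    rw [Nat.card_zpowers, pow_zero, orderOf_eq_one_iff] at hn
    exact hx hn
  have hdvd : p ∣ Fintype.card (Subgroup.zpowers x) := by
    rw [← Nat.card_eq_fintype_card, hn]
    exact dvd_pow_self p hn0
  obtain ⟨w, hw⟩ := exists_prime_orderOf_dvd_card p hdvd
  exact ⟨w.val, w.2, by rw [Subgroup.orderOf_coe]; exact hw⟩

lemma my_phi_mono {p : ℕ} (hp : p.Prime) [Finite G] (hG : IsPGroup p G)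
    {x y : G} (hx : x ≠ 1) (hxy : x ∈ Subgroup.zpowers y) :
    {z : G | z ∈ Subgroup.zpowers x ∧ z ^ p = 1}
      = {z : G | z ∈ Subgroup.zpowers y ∧ z ^ p = 1} := by
  classical
  have hle : Subgroup.zpowers x ≤ Subgroup.zpowers y := Subgroup.zpowers_le.mpr hxy
  apply Set.Subset.antisymm
  · rintro z ⟨hz1, hz2⟩; exact ⟨hle hz1, hz2⟩
  rintro z ⟨hz1, hz2⟩
  obtain ⟨w, hwx, hwp⟩ := my_exists_order_p hp hG hx
  refine ⟨?_, hz2⟩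
  haveI : Fintype (Subgroup.zpowers y) := Fintype.ofFinite _
  haveI : IsCyclic (Subgroup.zpowers y) := my_zpowers_isCyclic y
  set K := Subgroup.zpowers y with hK
  set w' : K := ⟨w, hle hwx⟩ with hw'
  have hw'ord : orderOf w' = p := by rw [Subgroup.orderOf_mk]; exact hwp
  set z' : K := ⟨z, hz1⟩ with hz'
  have hz'p : z' ^ p = 1 := by
    apply Subtype.ext
    simpa using hz2
  have hT : (Finset.univ.filter (fun a : K => a ^ p = 1)).card ≤ p := by
    simpa using IsCyclic.card_pow_eq_one_le (α := K) (n := p) hp.pos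
  have hw'p : w' ^ p = 1 := by rw [← hw'ord]; exact pow_orderOf_eq_one w'
  have hsub : ((Subgroup.zpowers w' : Set K)).toFinset ⊆ (Finset.univ.filter (fun a : K => a ^ p = 1)) := by
    intro a ha
    rw [Set.mem_toFinset] at ha
    obtain ⟨k, hk⟩ := ha
    have : a ^ p = 1 := by
      rw [← hk, ← zpow_natCast, ← zpow_mul, mul_comm, zpow_mul, zpow_natCast, hw'p, one_zpow]
    simpa using this
  have hcardW : ((Subgroup.zpowers w' : Set K)).toFinset.card = p := by
    rw [Set.toFinset_card]
    rw [← Nat.card_eq_fintype_card]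
    have := Nat.card_zpowers w'
    rw [← hw'ord]
    exact this
  have heq := Finset.eq_of_subset_of_card_le hsub (by rw [hcardW]; exact hT)
  have hz'T : z' ∈ ((Finset.univ.filter (fun a : K => a ^ p = 1)) : Finset K) := by simpa using hz'p
  rw [← heq, Set.mem_toFinset] at hz'T
  obtain ⟨k, hk⟩ := hz'T
  have hzw : z = w ^ k := by
    have := congrArg Subtype.val hk
    simpa using this.symm
  rw [hzw]
  exact Subgroup.zpow_mem _ hwx k

lemma my_reach_inv {p : ℕ} (hp : p.Prime) [Finite G] (hG : IsPGroup p G)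
    {u v : ↥({(1:G)}ᶜ : Set G)}
    (h : ((powerGraph G).induce {(1:G)}ᶜ).Reachable u v) :
    {z : G | z ∈ Subgroup.zpowers u.val ∧ z ^ p = 1}
      = {z : G | z ∈ Subgroup.zpowers v.val ∧ z ^ p = 1} := by
  obtain ⟨w⟩ := h
  induction w with
  | nil => rfl
  | @cons a b c hab wbc ih =>
    have hadj : (powerGraph G).Adj a.val b.val := hab
    have ha1 : a.val ≠ 1 := a.2
    have hb1 : b.val ≠ 1 := b.2
    rcases hadj.2 with hc | hc
    · exact (my_phi_mono hp hG ha1 hc).trans ih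
    · exact ((my_phi_mono hp hG hb1 hc).symm).trans ih

lemma my_pg_cycle {x : G} (hx : 4 ≤ orderOf x) (hx1 : x ∈ ({(1:G)}ᶜ : Set G)) :
    ∃ w : ((powerGraph G).induce {(1:G)}ᶜ).Walk ⟨x, hx1⟩ ⟨x, hx1⟩, w.IsCycle := by
  have hxne : x ≠ 1 := by
    intro h; rw [h, orderOf_one] at hx; omega
  have hx2 : x ^ 2 ≠ 1 := by
    intro h
    have := Nat.le_of_dvd (by norm_num) (orderOf_dvd_of_pow_eq_one h)
    omega
  have hx3 : x ^ 3 ≠ 1 := by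
    intro h
    have := Nat.le_of_dvd (by norm_num) (orderOf_dvd_of_pow_eq_one h)
    omega
  have hxinv : x⁻¹ ≠ 1 := by simpa using hxne
  have hab : x ≠ x ^ 2 := by
    intro h
    apply hxne
    have : x * 1 = x * x := by rw [mul_one]; rw [← pow_two]; exact h
    exact ((mul_left_cancel this)).symm
  have hbc : x ^ 2 ≠ x⁻¹ := by
    intro h
    apply hx3
    rw [pow_succ, h, inv_mul_cancel]
  have hca : x⁻¹ ≠ x := by
    intro h
    apply hx2
    rw [pow_two]
    nth_rewrite 2 [← h]
    exact mul_inv_cancel x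
  let A : ↥({(1:G)}ᶜ : Set G) := ⟨x, hx1⟩
  let B : ↥({(1:G)}ᶜ : Set G) := ⟨x ^ 2, by simpa using hx2⟩
  let C : ↥({(1:G)}ᶜ : Set G) := ⟨x⁻¹, by simpa using hxinv⟩
  have eAB : ((powerGraph G).induce {(1:G)}ᶜ).Adj A B :=
    ⟨by simpa using hab, Or.inr ⟨(2 : ℤ), by change x ^ (2:ℤ) = x ^ 2; group⟩⟩
  have eBC : ((powerGraph G).induce {(1:G)}ᶜ).Adj B C :=
    ⟨by simpa using hbc, Or.inl ⟨(-2 : ℤ), by change x⁻¹ ^ (-2:ℤ) = x ^ 2; group⟩⟩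
  have eCA : ((powerGraph G).induce {(1:G)}ᶜ).Adj C A :=
    ⟨by simpa using hca, Or.inl ⟨(-1 : ℤ), by change x ^ (-1:ℤ) = x⁻¹; group⟩⟩
  refine ⟨SimpleGraph.Walk.cons eAB (SimpleGraph.Walk.cons eBC
    (SimpleGraph.Walk.cons eCA SimpleGraph.Walk.nil)), ?_⟩
  have hAB : A ≠ B := by simp [A, B]; exact hab
  have hBC : B ≠ C := by simp [B, C]; exact hbc
  have hCA : C ≠ A := by simp [C, A]; exact hca
  have hBA := hAB.symm
  have hCB := hBC.symm
  have hAC := hCA.symm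
  rw [SimpleGraph.Walk.isCycle_def]
  refine ⟨?_, by simp, ?_⟩
  · rw [SimpleGraph.Walk.isTrail_def]
    simp only [SimpleGraph.Walk.edges_cons, SimpleGraph.Walk.edges_nil, List.nodup_cons,
      List.mem_cons, List.not_mem_nil, or_false, List.nodup_nil, and_true, Sym2.eq,
      Sym2.rel_iff', Prod.mk.injEq, Prod.swap_prod_mk, not_or]
    tauto
  · simp only [SimpleGraph.Walk.support_cons, SimpleGraph.Walk.support_nil, List.tail_cons,
      List.nodup_cons, List.mem_cons, List.not_mem_nil, or_false, List.nodup_nil, and_true,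
      List.mem_singleton, not_or]
    tauto

lemma my_pg_connected : ((powerGraph G).induce (∅ᶜ : Set G)).Connected := by
  rw [SimpleGraph.connected_iff]
  refine ⟨?_, ⟨⟨1, by simp⟩⟩⟩
  intro a b
  have key : ∀ c : ↥(∅ᶜ : Set G),
      ((powerGraph G).induce (∅ᶜ : Set G)).Reachable c ⟨1, by simp⟩ := by
    intro c
    by_cases h : c.val = 1
    · have : c = ⟨1, by simp⟩ := Subtype.ext h
      rw [this]
    · exact SimpleGraph.Adj.reachable ⟨h, Or.inr (Subgroup.one_mem _)⟩
  exact (key a).trans (key b).symm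

end MyAux

/-- If a finite p-group `G` has two maximal cyclic subgroups of order at least 4 with
trivial intersection, then `{e}` is a cyclic vertex cutset of `P(G)` and
`κ(P(G)) = cκ(P(G)) = 1`. -/
theorem identity_is_cyclic_cutset
    (p : ℕ) (hp : p.Prime) (G : Type*) [Group G] [Finite G] (hG : IsPGroup p G)
    (M₁ M₂ : Subgroup G) (h1 : IsMaximalCyclic M₁) (h2 : IsMaximalCyclic M₂)
    (hne : M₁ ≠ M₂) (hint : M₁ ⊓ M₂ = ⊥)
    (hc1 : 4 ≤ Nat.card M₁) (hc2 : 4 ≤ Nat.card M₂) :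
    IsCyclicVertexCutset (powerGraph G) {1} ∧
    vertexConnectivity (powerGraph G) = 1 ∧
    cyclicVertexConnectivity (powerGraph G) = 1 := by
  classical
  obtain ⟨x₁, hM1⟩ := h1.1
  obtain ⟨x₂, hM2⟩ := h2.1
  subst hM1; subst hM2
  have ho1 : 4 ≤ orderOf x₁ := by rwa [Nat.card_zpowers] at hc1
  have ho2 : 4 ≤ orderOf x₂ := by rwa [Nat.card_zpowers] at hc2
  have hx1ne : x₁ ≠ 1 := by intro h; rw [h, orderOf_one] at ho1; omega
  have hx2ne : x₂ ≠ 1 := by intro h; rw [h, orderOf_one] at ho2; omega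
  have m1 : x₁ ∈ ({(1:G)}ᶜ : Set G) := Set.mem_compl_singleton_iff.mpr hx1ne
  have m2 : x₂ ∈ ({(1:G)}ᶜ : Set G) := Set.mem_compl_singleton_iff.mpr hx2ne
  set u : ↥({(1:G)}ᶜ : Set G) := ⟨x₁, m1⟩ with hu
  set v : ↥({(1:G)}ᶜ : Set G) := ⟨x₂, m2⟩ with hv
  have hnr : ¬ ((powerGraph G).induce {(1:G)}ᶜ).Reachable u v := by
    intro h
    have heq := my_reach_inv hp hG h
    obtain ⟨w, hwx, hwp⟩ := my_exists_order_p hp hG hx1ne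
    have hw1 : w ≠ 1 := by
      intro h'; rw [h', orderOf_one] at hwp; exact hp.one_lt.ne' hwp.symm
    have hmem : w ∈ {z : G | z ∈ Subgroup.zpowers x₁ ∧ z ^ p = 1} :=
      ⟨hwx, by rw [← hwp]; exact pow_orderOf_eq_one w⟩
    rw [hu, hv] at heq
    rw [heq] at hmem
    have hw2 : w ∈ Subgroup.zpowers x₁ ⊓ Subgroup.zpowers x₂ := ⟨hwx, hmem.1⟩
    rw [hint] at hw2
    exact hw1 hw2
  have hnc : ¬ ((powerGraph G).induce ({(1:G)}ᶜ : Set G)).Connected :=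
    fun h => hnr (h.preconnected u v)
  obtain ⟨w1, hw1c⟩ := my_pg_cycle ho1 m1
  obtain ⟨w2, hw2c⟩ := my_pg_cycle ho2 m2
  have hcut : IsCyclicVertexCutset (powerGraph G) {1} :=
    ⟨hnc, u, v, hnr, ⟨w1, hw1c⟩, ⟨w2, hw2c⟩⟩
  refine ⟨hcut, ?_, ?_⟩
  · have hmem1 : (1:ℕ) ∈ {n : ℕ | ∃ S : Set G, S.ncard = n ∧
        ((Sᶜ : Set G).Subsingleton ∨ ¬ ((powerGraph G).induce Sᶜ).Connected)} :=
      ⟨{1}, Set.ncard_singleton 1, Or.inr hnc⟩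
    have h0 : (0:ℕ) ∉ {n : ℕ | ∃ S : Set G, S.ncard = n ∧
        ((Sᶜ : Set G).Subsingleton ∨ ¬ ((powerGraph G).induce Sᶜ).Connected)} := by
      rintro ⟨S, hS0, hS⟩
      rw [Set.ncard_eq_zero S.toFinite] at hS0
      subst hS0
      rcases hS with h | h
      · rw [Set.compl_empty] at h
        exact hx1ne (h (Set.mem_univ x₁) (Set.mem_univ 1))
      · exact h my_pg_connected
    unfold vertexConnectivity
    have hmem := Nat.sInf_mem ⟨1, hmem1⟩
    have hle := Nat.sInf_le hmem1
    have hne0 : sInf {n : ℕ | ∃ S : Set G, S.ncard = n ∧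
        ((Sᶜ : Set G).Subsingleton ∨ ¬ ((powerGraph G).induce Sᶜ).Connected)} ≠ 0 :=
      fun h => h0 (h ▸ hmem)
    omega
  · unfold cyclicVertexConnectivity
    apply le_antisymm
    · have h := iInf₂_le (f := fun (S : Set G) (_ : S ∈
          {S : Set G | IsCyclicVertexCutset (powerGraph G) S}) => (S.ncard : ℕ∞))
        ({1} : Set G) hcut
      simpa [Set.ncard_singleton] using h
    · refine le_iInf₂ fun S hS => ?_
      have hSne : S.Nonempty := by
        by_contra h
        rw [Set.not_nonempty_iff_eq_empty] at h
        subst h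
        exact hS.1 my_pg_connected
      exact Nat.one_le_cast.mpr ((Set.ncard_pos S.toFinite).mpr hSne)
end

section
/- Let p be a prime, G a finite p-group, and M1, ..., Mr (r ≥ 2) maximal cyclic subgroups of G such that Mi ∩ Mj is nontrivial for all i ≠ j. Then all the Mi share a common subgroup of order p, and the subgraph of the power graph P(G) induced by (M1 ∪ M2 ∪ ... ∪ Mr) \ {e} is connected. -/
open Subgroup

open Subgroup

lemma zpowers_isCyclic' {G : Type*} [Group G] (g : G) : IsCyclic (Subgroup.zpowers g) := by
  refine ⟨⟨⟨g, mem_zpowers g⟩, fun x => ?_⟩⟩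
  obtain ⟨k, hk⟩ := x.2
  exact ⟨k, Subtype.ext (by simpa using hk)⟩

lemma mem_zpowers_of_orderOf_eq {G : Type*} [Group G] [Finite G] {p : ℕ} (hp : p.Prime)
    {c a b : G} (ha : a ∈ zpowers c) (hb : b ∈ zpowers c)
    (hoa : orderOf a = p) (hob : orderOf b = p) : a ∈ zpowers b := by
  classical
  haveI := zpowers_isCyclic' c
  haveI : Fintype (zpowers c) := Fintype.ofFinite _
  set H := zpowers c
  set a' : H := ⟨a, ha⟩
  set b' : H := ⟨b, hb⟩
  have hoa' : orderOf a' = p := by rw [Subgroup.orderOf_mk, hoa]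
  have hob' : orderOf b' = p := by rw [Subgroup.orderOf_mk, hob]
  set T : Finset H := Finset.univ.filter (fun x => x ^ p = 1) with hT
  have hTcard : T.card ≤ p := IsCyclic.card_pow_eq_one_le hp.pos
  have hsub : ∀ x : H, orderOf x = p → (zpowers x : Set H) ⊆ (T : Set H) := by
    intro x hx y hy
    obtain ⟨k, hk⟩ := hy
    simp only [T, Finset.coe_filter, Set.mem_setOf_eq, Finset.mem_univ, true_and]
    rw [← hk, ← zpow_natCast, ← zpow_mul, mul_comm, zpow_mul, zpow_natCast, ← hx,
      pow_orderOf_eq_one, one_zpow]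
  have hcardA : (zpowers a' : Set H).ncard = p := by
    rw [← Nat.card_coe_set_eq, SetLike.coe_sort_coe, Nat.card_zpowers]; exact hoa'
  have hcardB : (zpowers b' : Set H).ncard = p := by
    rw [← Nat.card_coe_set_eq, SetLike.coe_sort_coe, Nat.card_zpowers]; exact hob'
  have hBeq : (zpowers b' : Set H) = (T : Set H) := by
    refine Set.eq_of_subset_of_ncard_le (hsub b' hob') ?_ (T.finite_toSet)
    rw [Set.ncard_coe_finset, hcardB]; exact hTcard
  have : a' ∈ zpowers b' := by
    have := hsub a' hoa' (mem_zpowers a')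
    rw [← hBeq] at this; exact this
  obtain ⟨k, hk⟩ := this
  refine ⟨k, ?_⟩
  have := congrArg (Subtype.val) hk
  simpa using this

lemma exists_orderp {G : Type*} [Group G] [Finite G] {p : ℕ} (hp : p.Prime)
    (hG : IsPGroup p G) (x : G) (hx : x ≠ 1) :
    ∃ y ∈ zpowers x, orderOf y = p := by
  obtain ⟨k, hk⟩ := hG x
  have hdvd : orderOf x ∣ p ^ k := orderOf_dvd_of_pow_eq_one hk
  obtain ⟨j, hj, hjx⟩ := (Nat.dvd_prime_pow hp).mp hdvd
  have hj0 : j ≠ 0 := by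
    rintro rfl
    simp only [pow_zero, orderOf_eq_one_iff] at hjx
    exact hx hjx
  refine ⟨x ^ (p ^ (j - 1)), Subgroup.pow_mem _ (mem_zpowers x) _, ?_⟩
  rw [orderOf_pow, hjx, Nat.gcd_eq_right (pow_dvd_pow p (Nat.sub_le j 1)),
    ← pow_sub_one_mul hj0 p] at *
  · exact Nat.mul_div_cancel_left p (Nat.pow_pos hp.pos) |>.symm ▸ rfl

/-- If `M₁, …, Mᵣ` (`r ≥ 2`) are maximal cyclic subgroups of a finite p-group with
pairwise nontrivial intersections, then they share a common subgroup of order `p`,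
and the subgraph of `P(G)` induced by `(M₁ ∪ ⋯ ∪ Mᵣ) \ {e}` is connected. -/
theorem pairwise_nontrivial_intersection_common_subgroup_connected
    (p : ℕ) (hp : p.Prime) (G : Type*) [Group G] [Finite G] (hG : IsPGroup p G)
    (r : ℕ) (hr : 2 ≤ r) (M : Fin r → Subgroup G)
    (hmax : ∀ i, IsMaximalCyclic (M i))
    (hint : ∀ i j, i ≠ j → M i ⊓ M j ≠ ⊥) :
    (∃ H : Subgroup G, Nat.card H = p ∧ ∀ i, H ≤ M i) ∧
    ((powerGraph G).induce ((⋃ i, (M i : Set G)) \ {1})).Connected := by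
  have h0r : 0 < r := by omega
  have h1r : 1 < r := by omega
  set i0 : Fin r := ⟨0, h0r⟩ with hi0
  set i1 : Fin r := ⟨1, h1r⟩ with hi1
  have h01 : i0 ≠ i1 := by simp [hi0, hi1, Fin.ext_iff]
  choose g hg using fun i => (hmax i).1
  have hne : ∀ i, M i ≠ ⊥ := by
    intro i hbot
    obtain ⟨j, hj⟩ : ∃ j : Fin r, j ≠ i := by
      by_cases h : i = i0
      · exact ⟨i1, by rw [h]; exact h01.symm⟩
      · exact ⟨i0, fun e => h e.symm⟩
    exact hint i j hj.symm (by simp [hbot])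
  obtain ⟨⟨z, hzM⟩, hz1⟩ := Subgroup.ne_bot_iff_exists_ne_one.mp (hne i0)
  have hz1' : z ≠ 1 := by simpa [Subtype.ext_iff] using hz1
  obtain ⟨h, hhz, hhp⟩ := exists_orderp hp hG z hz1'
  have hhM0 : h ∈ M i0 := Subgroup.zpowers_le.mpr hzM hhz
  have hmem : ∀ i, h ∈ M i := by
    intro i
    by_cases hi : i = i0
    · rw [hi]; exact hhM0
    · obtain ⟨⟨w, hw⟩, hw1⟩ := Subgroup.ne_bot_iff_exists_ne_one.mp
        (hint i0 i (fun e => hi e.symm))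
      have hw1' : w ≠ 1 := by simpa [Subtype.ext_iff] using hw1
      obtain ⟨y, hyw, hyp⟩ := exists_orderp hp hG w hw1'
      have hyM0 : y ∈ M i0 := Subgroup.zpowers_le.mpr hw.1 hyw
      have hyMi : y ∈ M i := Subgroup.zpowers_le.mpr hw.2 hyw
      have hmemzp : h ∈ Subgroup.zpowers y :=
        mem_zpowers_of_orderOf_eq hp (by rw [← hg i0]; exact hhM0)
          (by rw [← hg i0]; exact hyM0) hhp hyp
      exact Subgroup.zpowers_le.mpr hyMi hmemzp
  have key : ∀ i (x : G), x ∈ M i → x ≠ 1 → h ∈ Subgroup.zpowers x := by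
    intro i x hx hx1
    obtain ⟨y, hyx, hyp⟩ := exists_orderp hp hG x hx1
    have hyMi : y ∈ M i := Subgroup.zpowers_le.mpr hx hyx
    have hmemzp : h ∈ Subgroup.zpowers y :=
      mem_zpowers_of_orderOf_eq hp (by rw [← hg i]; exact hmem i)
        (by rw [← hg i]; exact hyMi) hhp hyp
    exact Subgroup.zpowers_le.mpr hyx hmemzp
  have hh1 : h ≠ 1 := by
    intro e
    rw [e, orderOf_one] at hhp
    exact hp.one_lt.ne' hhp.symm
  constructor
  · exact ⟨Subgroup.zpowers h, by rw [Nat.card_zpowers, hhp],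
      fun i => Subgroup.zpowers_le.mpr (hmem i)⟩
  · set S : Set G := (⋃ i, (M i : Set G)) \ {1} with hS
    have hhS : h ∈ S := ⟨Set.mem_iUnion.mpr ⟨i0, hmem i0⟩, by simpa using hh1⟩
    have hreach : ∀ u : ↥S, ((powerGraph G).induce S).Reachable u ⟨h, hhS⟩ := by
      intro u
      by_cases hu : u = ⟨h, hhS⟩
      · rw [hu]
      · obtain ⟨huU, hu1⟩ := u.2
        obtain ⟨s, ⟨i, rfl⟩, hui⟩ := huU
        have hu1' : (u : G) ≠ 1 := by simpa using hu1
        have hadj : ((powerGraph G).induce S).Adj u ⟨h, hhS⟩ := by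
          refine And.intro (fun e => hu (Subtype.ext e)) (Or.inr (key i u hui hu1'))
        exact hadj.reachable
    haveI : Nonempty ↥S := ⟨⟨h, hhS⟩⟩
    exact ⟨fun u v => (hreach u).trans (hreach v).symm⟩
end
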